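/- arXiv:2206.12087 — 5 statements merged into one kernel-verified Lean document; each statement's English description precedes it below -/
import Mathlib

section
/- For every n ≥ 0, the number of zigzag knight's paths of size 2n ending on the x-axis equals the number of peakless Motzkin paths of length n+1 (the generalized Catalan number); in particular for n = 0,…,10 these numbers are 1, 1, 2, 4, 8, 17, 37, 82, 185, 423, 978. Moreover, there is no zigzag knight's path of odd size ending on the x-axis. -/
open List

/-- The four right-moves of a knight. -/
def KnightSteps : Set (ℤ × ℤ) := {(2,1), (2,-1), (1,2), (1,-2)}

/-- All partial sums of the y-coordinates are nonnegative (the path stays in ℕ²). -/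
def NonnegHeights (p : List (ℤ × ℤ)) : Prop :=
  ∀ i, 0 ≤ ((p.take i).map Prod.snd).sum

/-- A partial knight's path: steps from `KnightSteps`, never going below the x-axis. -/
def IsPartialKnight (p : List (ℤ × ℤ)) : Prop :=
  (∀ s ∈ p, s ∈ KnightSteps) ∧ NonnegHeights p

/-- Any two consecutive steps have vertical components of opposite sign. -/
def IsZigzag (p : List (ℤ × ℤ)) : Prop :=
  List.Chain' (fun a b => a.2 * b.2 < 0) p

/-- A partial zigzag knight's path. -/
def IsPartialZigzag (p : List (ℤ × ℤ)) : Prop :=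
  IsPartialKnight p ∧ IsZigzag p

/-- The height of the endpoint of a path. -/
def pathHeight (p : List (ℤ × ℤ)) : ℤ := (p.map Prod.snd).sum

/-- The size (x-coordinate of the endpoint) of a path. -/
def pathSize (p : List (ℤ × ℤ)) : ℤ := (p.map Prod.fst).sum

/-- A zigzag knight's path ending on the x-axis. -/
def IsZigzagKnightPath (p : List (ℤ × ℤ)) : Prop :=
  IsPartialZigzag p ∧ pathHeight p = 0

/-- The last step of `p` exists and is an up-step. -/
def EndsWithUp (p : List (ℤ × ℤ)) : Prop :=
  ∃ s, p.getLast? = some s ∧ 0 < s.2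

/-- The last step of `p` exists and is a down-step. -/
def EndsWithDown (p : List (ℤ × ℤ)) : Prop :=
  ∃ s, p.getLast? = some s ∧ s.2 < 0

def Estep : ℤ × ℤ := (2, 1)
def Ebar  : ℤ × ℤ := (2, -1)
def Nstep : ℤ × ℤ := (1, 2)
def Nbar  : ℤ × ℤ := (1, -2)

/-- A peakless Motzkin path, encoded as a list of steps `1 = U`, `-1 = D`, `0 = F`
with nonnegative partial sums, ending at height 0, and with no factor `UD`. -/
def IsPeaklessMotzkin (m : List ℤ) : Prop :=
  (∀ x ∈ m, x = 1 ∨ x = -1 ∨ x = 0) ∧ (∀ i, 0 ≤ (m.take i).sum) ∧ m.sum = 0 ∧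
    List.Chain' (fun a b => ¬ (a = 1 ∧ b = -1)) m

/-- The number of zigzag knight's paths of size s ending on the x-axis. -/
noncomputable def zigzagCount (s : ℤ) : ℕ :=
  Nat.card {p : List (ℤ × ℤ) // IsZigzagKnightPath p ∧ pathSize p = s}

namespace S9

def pre (l : List ℤ) (i : ℕ) : ℤ := (l.take i).sum

@[simp] lemma pre_zero (l : List ℤ) : pre l 0 = 0 := rfl
@[simp] lemma pre_nil (i : ℕ) : pre [] i = 0 := by simp [pre]
@[simp] lemma pre_cons (a : ℤ) (l : List ℤ) (i : ℕ) : pre (a::l) (i+1) = a + pre l i := by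
  simp [pre]
lemma pre_append (l₁ l₂ : List ℤ) (i : ℕ) :
    pre (l₁ ++ l₂) i = pre l₁ i + pre l₂ (i - l₁.length) := by
  simp [pre, List.take_append]
lemma pre_of_le {l : List ℤ} {i : ℕ} (h : l.length ≤ i) : pre l i = l.sum := by
  simp [pre, List.take_of_length_le h]
lemma pre_length (l : List ℤ) : pre l l.length = l.sum := pre_of_le le_rfl

lemma nonnegHeights_iff (p : List (ℤ × ℤ)) :
    NonnegHeights p ↔ ∀ i, 0 ≤ pre (p.map Prod.snd) i := by
  unfold NonnegHeights pre
  simp [List.map_take]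

/-- compositional helper for prefix-sum nonnegativity -/
lemma pre_nonneg_append {s : ℤ} {l₁ l₂ : List ℤ}
    (h1 : ∀ i, 0 ≤ s + pre l₁ i) (h2 : ∀ i, 0 ≤ (s + l₁.sum) + pre l₂ i) :
    ∀ i, 0 ≤ s + pre (l₁ ++ l₂) i := by
  intro i
  rw [pre_append]
  rcases le_or_gt i l₁.length with h | h
  · rw [Nat.sub_eq_zero_of_le h]
    simpa using h1 i
  · rw [pre_of_le h.le]
    have := h2 (i - l₁.length)
    linarith

inductive CM : Type
  | nil : CM
  | B : CM → CM
  | A : CM → CM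
  | UD : CM → CM → CM

namespace CM

def wt : CM → ℕ
  | .nil => 0
  | .B q => 1 + wt q
  | .A q => 2 + wt q
  | .UD q r => 3 + wt q + wt r

def zig : CM → List (ℤ × ℤ)
  | .nil => []
  | .B q => (1,2) :: (1,-2) :: zig q
  | .A q => (2,1) :: (2,-1) :: zig q
  | .UD q r => (1,2) :: (2,-1) :: (zig q ++ (2,1) :: (1,-2) :: zig r)

def peak : CM → List ℤ
  | .nil => [0]
  | .B q => 0 :: peak q
  | .A q => 1 :: (peak q ++ [-1])
  | .UD q r => 1 :: (peak q ++ (-1) :: peak r)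

lemma mem_knight_iff (s : ℤ × ℤ) :
    s ∈ KnightSteps ↔ s = (2,1) ∨ s = (2,-1) ∨ s = (1,2) ∨ s = (1,-2) := by
  simp [KnightSteps]

lemma zig_mem : ∀ c : CM, ∀ s ∈ zig c, s ∈ KnightSteps := by
  intro c
  induction c with
  | nil => simp [zig]
  | B q ih => intro s hs; simp only [zig, mem_cons] at hs
              rcases hs with rfl | rfl | hs
              · simp [mem_knight_iff]
              · simp [mem_knight_iff]
              · exact ih s hs
  | A q ih => intro s hs; simp only [zig, mem_cons] at hs
              rcases hs with rfl | rfl | hs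
              · simp [mem_knight_iff]
              · simp [mem_knight_iff]
              · exact ih s hs
  | UD q r ihq ihr =>
      intro s hs
      simp only [zig, mem_cons, mem_append] at hs
      rcases hs with rfl | rfl | (hs | rfl | rfl | hs)
      · simp [mem_knight_iff]
      · simp [mem_knight_iff]
      · exact ihq s hs
      · simp [mem_knight_iff]
      · simp [mem_knight_iff]
      · exact ihr s hs

@[simp] lemma zig_sum : ∀ c : CM, ((zig c).map Prod.snd).sum = 0 := by
  intro c
  induction c with
  | nil => simp [zig]
  | B q ih => simp [zig, ih]
  | A q ih => simp [zig, ih]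
  | UD q r ihq ihr => simp [zig, ihq, ihr]

lemma zig_pre : ∀ c : CM, ∀ i, 0 ≤ pre ((zig c).map Prod.snd) i := by
  intro c
  induction c with
  | nil => simp [zig]
  | B q ih =>
      intro i
      match i with
      | 0 => simp
      | 1 => show (0:ℤ) ≤ pre (2 :: -2 :: _) 1; simp [pre_cons]
      | (j+2) =>
          show (0:ℤ) ≤ pre (2 :: -2 :: (zig q).map Prod.snd) (j+2)
          rw [pre_cons, pre_cons]
          have := ih j
          linarith
  | A q ih =>
      intro i
      match i with
      | 0 => simp
      | 1 => show (0:ℤ) ≤ pre (1 :: -1 :: _) 1; simp [pre_cons]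
      | (j+2) =>
          show (0:ℤ) ≤ pre (1 :: -1 :: (zig q).map Prod.snd) (j+2)
          rw [pre_cons, pre_cons]
          have := ih j
          linarith
  | UD q r ihq ihr =>
      intro i
      match i with
      | 0 => simp
      | 1 => show (0:ℤ) ≤ pre (2 :: -1 :: _) 1; simp [pre_cons]
      | (j+2) =>
          have hrw : ((zig (UD q r)).map Prod.snd) = 2 :: -1 ::
            ((zig q).map Prod.snd ++ 1 :: -2 :: (zig r).map Prod.snd) := by
            simp [zig]
          rw [hrw, pre_cons, pre_cons]
          have key : 0 ≤ (1:ℤ) + pre ((zig q).map Prod.snd ++ 1 :: -2 :: (zig r).map Prod.snd) j := by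
            refine pre_nonneg_append (fun i => ?_) (fun i => ?_) j
            · have := ihq i; linarith
            · rw [zig_sum]
              match i with
              | 0 => simp
              | 1 => simp [pre_cons]
              | (k+2) => rw [pre_cons, pre_cons]; have := ihr k; linarith
          linarith

@[simp] lemma zig_size : ∀ c : CM, pathSize (zig c) = 2 * (wt c : ℤ) := by
  intro c
  induction c with
  | nil => simp [zig, pathSize, wt]
  | B q ih => simp [zig, pathSize, wt] at ih ⊢; push_cast; linarith
  | A q ih => simp [zig, pathSize, wt] at ih ⊢; push_cast; linarith
  | UD q r ihq ihr => simp [zig, pathSize, wt] at ihq ihr ⊢; push_cast; linarith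



lemma zig_head : ∀ c : CM, ∀ x ∈ (zig c).head?, 0 < x.2 := by
  intro c
  cases c <;> simp [zig]

lemma zig_last : ∀ c : CM, ∀ x ∈ (zig c).getLast?, x.2 < 0 := by
  intro c
  induction c with
  | nil => simp [zig]
  | B q ih =>
      cases hq : zig q with
      | nil => simp [zig, hq]
      | cons a l =>
          intro x hx
          rw [zig, hq, List.getLast?_cons_cons, List.getLast?_cons_cons] at hx
          exact ih x (hq ▸ hx)
  | A q ih =>
      cases hq : zig q with
      | nil => simp [zig, hq]
      | cons a l =>
          intro x hx
          rw [zig, hq, List.getLast?_cons_cons, List.getLast?_cons_cons] at hx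
          exact ih x (hq ▸ hx)
  | UD q r ihq ihr =>
      intro x hx
      rw [zig, List.getLast?_cons_cons,
        show ((2,-1) : ℤ×ℤ) :: (zig q ++ (2,1) :: (1,-2) :: zig r)
          = (((2,-1) : ℤ×ℤ) :: zig q) ++ (2,1) :: (1,-2) :: zig r from by simp,
        List.getLast?_append_cons] at hx
      cases hr : zig r with
      | nil => rw [hr] at hx; simp at hx; subst hx; norm_num
      | cons a l =>
          rw [hr, List.getLast?_cons_cons, List.getLast?_cons_cons] at hx
          exact ihr x (hr ▸ hx)

lemma zig_chain : ∀ c : CM, List.Chain' (fun a b : ℤ × ℤ => a.2 * b.2 < 0) (zig c) := by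
  intro c
  induction c with
  | nil => simp [zig, List.Chain']
  | B q ih =>
      rw [zig, List.Chain', List.isChain_cons, List.isChain_cons]
      refine ⟨by simp, fun y hy => ?_, ih⟩
      have := zig_head q y hy
      simp; nlinarith
  | A q ih =>
      rw [zig, List.Chain', List.isChain_cons, List.isChain_cons]
      refine ⟨by simp, fun y hy => ?_, ih⟩
      have := zig_head q y hy
      simp; nlinarith
  | UD q r ihq ihr =>
      rw [zig, List.Chain', List.isChain_cons, List.isChain_cons]
      refine ⟨by simp, ?_, ?_⟩
      · intro y hy
        rcases hq : zig q with _ | ⟨a, l⟩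
        · rw [hq] at hy; simp at hy; subst hy; norm_num
        · rw [hq] at hy; simp at hy
          have := zig_head q a (by rw [hq]; rfl)
          subst hy
          show (-1 : ℤ) * a.2 < 0
          nlinarith
      · rw [List.isChain_append]
        refine ⟨ihq, ?_, ?_⟩
        · rw [List.isChain_cons, List.isChain_cons]
          refine ⟨by simp, fun y hy => ?_, ihr⟩
          have := zig_head r y hy
          simp; nlinarith
        · intro x hx y hy
          simp at hy
          have := zig_last q x hx
          subst hy
          show x.2 * (1:ℤ) < 0
          linarith

lemma zig_is_path (c : CM) : IsZigzagKnightPath (zig c) := by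
  refine ⟨⟨⟨zig_mem c, ?_⟩, zig_chain c⟩, zig_sum c⟩
  rw [nonnegHeights_iff]
  exact zig_pre c

/- ### peak basics -/

@[simp] lemma peak_ne_nil : ∀ c : CM, peak c ≠ [] := by
  intro c; cases c <;> simp [peak]

@[simp] lemma peak_sum : ∀ c : CM, (peak c).sum = 0 := by
  intro c
  induction c with
  | nil => simp [peak]
  | B q ih => simp [peak, ih]
  | A q ih => simp [peak, ih]
  | UD q r ihq ihr => simp [peak, ihq, ihr]

@[simp] lemma peak_len : ∀ c : CM, (peak c).length = wt c + 1 := by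
  intro c
  induction c with
  | nil => simp [peak, wt]
  | B q ih => simp [peak, wt, ih]; omega
  | A q ih => simp [peak, wt, ih]; omega
  | UD q r ihq ihr => simp [peak, wt, ihq, ihr]; omega

lemma peak_mem : ∀ c : CM, ∀ x ∈ peak c, x = 1 ∨ x = -1 ∨ x = 0 := by
  intro c
  induction c with
  | nil => simp [peak]
  | B q ih => intro x hx; simp only [peak, mem_cons] at hx
              rcases hx with rfl | hx
              · tauto
              · exact ih x hx
  | A q ih => intro x hx; simp only [peak, mem_cons, mem_append, mem_singleton,
                List.not_mem_nil, or_false] at hx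
              rcases hx with rfl | hx | rfl
              · tauto
              · exact ih x hx
              · tauto
  | UD q r ihq ihr =>
      intro x hx
      simp only [peak, mem_cons, mem_append] at hx
      rcases hx with rfl | hx | rfl | hx
      · tauto
      · exact ihq x hx
      · tauto
      · exact ihr x hx

lemma peak_pre : ∀ c : CM, ∀ i, 0 ≤ pre (peak c) i := by
  intro c
  induction c with
  | nil => intro i
           match i with
           | 0 => simp
           | (j+1) => rw [peak]; rw [pre_cons]; simp
  | B q ih =>
      intro i
      match i with
      | 0 => simp
      | (j+1) => rw [peak, pre_cons]; have := ih j; linarith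
  | A q ih =>
      intro i
      match i with
      | 0 => simp
      | (j+1) =>
          rw [peak, pre_cons]
          have key : ∀ k, 0 ≤ (1:ℤ) + pre (peak q ++ [-1]) k := by
            refine pre_nonneg_append (fun k => ?_) (fun k => ?_)
            · have := ih k; linarith
            · rw [peak_sum]
              match k with
              | 0 => simp
              | (m+1) => rw [pre_cons]; simp
          have := key j; linarith
  | UD q r ihq ihr =>
      intro i
      match i with
      | 0 => simp
      | (j+1) =>
          rw [peak, pre_cons]
          have key : ∀ k, 0 ≤ (1:ℤ) + pre (peak q ++ (-1) :: peak r) k := by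
            refine pre_nonneg_append (fun k => ?_) (fun k => ?_)
            · have := ihq k; linarith
            · rw [peak_sum]
              match k with
              | 0 => simp
              | (m+1) => rw [pre_cons]; have := ihr m; linarith
          have := key j; linarith

lemma peak_head : ∀ c : CM, ∀ x ∈ (peak c).head?, x ≠ -1 := by
  intro c; cases c <;> simp [peak]

lemma peak_last : ∀ c : CM, ∀ x ∈ (peak c).getLast?, x ≠ 1 := by
  intro c
  induction c with
  | nil => simp [peak]
  | B q ih =>
      intro x hx
      rw [peak] at hx
      rcases hq : peak q with _ | ⟨a, l⟩
      · exact absurd hq (peak_ne_nil q)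
      · rw [hq, List.getLast?_cons_cons] at hx
        exact ih x (hq ▸ hx)
  | A q ih =>
      intro x hx
      rw [peak] at hx
      have h1 : ((1:ℤ) :: (peak q ++ [-1])).getLast? = some (-1) := by
        rw [show ((1:ℤ) :: (peak q ++ [-1])) = ((1:ℤ) :: peak q) ++ (-1) :: [] from by simp,
          List.getLast?_append_cons]
        rfl
      rw [h1] at hx
      simp at hx
      omega
  | UD q r ihq ihr =>
      intro x hx
      rw [peak] at hx
      have h2 : ((1:ℤ) :: (peak q ++ (-1) :: peak r)).getLast? = (((-1):ℤ) :: peak r).getLast? := by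
        rw [show ((1:ℤ) :: (peak q ++ (-1) :: peak r)) = ((1:ℤ) :: peak q) ++ (-1) :: peak r from by simp,
          List.getLast?_append_cons]
      rw [h2] at hx
      rcases hr : peak r with _ | ⟨a, l⟩
      · exact absurd hr (peak_ne_nil r)
      · rw [hr, List.getLast?_cons_cons] at hx
        exact ihr x (hr ▸ hx)

lemma peak_chain : ∀ c : CM, List.Chain' (fun a b : ℤ => ¬ (a = 1 ∧ b = -1)) (peak c) := by
  intro c
  induction c with
  | nil => simp [peak, List.Chain']
  | B q ih =>
      rw [peak, List.Chain', List.isChain_cons]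
      exact ⟨by simp, ih⟩
  | A q ih =>
      rw [peak, List.Chain', List.isChain_cons]
      constructor
      · intro y hy
        rcases hq : peak q with _ | ⟨a, l⟩
        · exact absurd hq (peak_ne_nil q)
        · rw [hq] at hy; simp at hy
          have := peak_head q a (by rw [hq]; rfl)
          subst hy; tauto
      · rw [List.isChain_append]
        refine ⟨ih, by simp, ?_⟩
        intro x hx y hy
        simp at hy
        have := peak_last q x hx
        subst hy; tauto
  | UD q r ihq ihr =>
      rw [peak, List.Chain', List.isChain_cons]
      constructor
      · intro y hy
        rcases hq : peak q with _ | ⟨a, l⟩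
        · exact absurd hq (peak_ne_nil q)
        · rw [hq] at hy; simp at hy
          have := peak_head q a (by rw [hq]; rfl)
          subst hy; tauto
      · rw [List.isChain_append]
        refine ⟨ihq, ?_, ?_⟩
        · rw [List.isChain_cons]
          exact ⟨by simp, ihr⟩
        · intro x hx y hy
          simp at hy
          have := peak_last q x hx
          subst hy; tauto

lemma peak_is_peakless (c : CM) : IsPeaklessMotzkin (peak c) := by
  refine ⟨peak_mem c, fun i => ?_, peak_sum c, peak_chain c⟩
  exact peak_pre c i



end CM

/-- Uniqueness of the "first return" split of a list of integers. -/
lemma split_eq {A₁ B₁ A₂ B₂ : List ℤ}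
    (h : A₁ ++ B₁ = A₂ ++ B₂)
    (h1 : ∀ i < A₁.length, 0 ≤ pre A₁ i) (h1s : A₁.sum = -1)
    (h2 : ∀ i < A₂.length, 0 ≤ pre A₂ i) (h2s : A₂.sum = -1) :
    A₁ = A₂ ∧ B₁ = B₂ := by
  have key : ∀ {X₁ Y₁ X₂ Y₂ : List ℤ}, X₁ ++ Y₁ = X₂ ++ Y₂ → X₁.length ≤ X₂.length →
      (∀ i < X₂.length, 0 ≤ pre X₂ i) → X₁.sum = -1 → X₂.length ≤ X₁.length := by
    intro X₁ Y₁ X₂ Y₂ he hle hpre hsum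
    by_contra hlt
    push_neg at hlt
    have hpref : X₁ <+: X₂ :=
      List.prefix_of_prefix_length_le ⟨Y₁, he⟩ (List.prefix_append X₂ Y₂) hle
    obtain ⟨C, hC⟩ := hpref
    have hval : pre X₂ X₁.length = X₁.sum := by
      rw [← hC, pre_append, Nat.sub_self, pre_zero, pre_length, add_zero]
    have := hpre X₁.length hlt
    rw [hval, hsum] at this
    linarith
  have hlen : A₁.length = A₂.length := by
    rcases le_total A₁.length A₂.length with h' | h'
    · exact le_antisymm h' (key h h' h2 h1s)
    · exact le_antisymm (key h.symm h' h1 h2s) h'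
  exact List.append_inj h hlen

namespace CM

lemma peak_A_pre (q : CM) : ∀ i < (peak q ++ [-1]).length, 0 ≤ pre (peak q ++ [-1]) i := by
  intro i hi
  rw [pre_append]
  simp only [List.length_append, List.length_cons, List.length_nil] at hi
  have : i ≤ (peak q).length := by omega
  rw [Nat.sub_eq_zero_of_le this, pre_zero, add_zero]
  exact peak_pre q i

lemma peak_A_sum (q : CM) : (peak q ++ [-1]).sum = -1 := by simp

lemma peak_inj : ∀ c₁ c₂ : CM, peak c₁ = peak c₂ → c₁ = c₂ := by
  intro c₁
  induction c₁ with
  | nil =>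
      intro c₂ h
      cases c₂ with
      | nil => rfl
      | B q => rw [peak, peak] at h; simp at h
      | A q => rw [peak, peak] at h; simp at h
      | UD q r => rw [peak, peak] at h; simp at h
  | B q ih =>
      intro c₂ h
      cases c₂ with
      | nil => rw [peak, peak] at h; simp at h
      | B q' => rw [peak, peak] at h; simp at h; rw [ih q' h]
      | A q' => rw [peak, peak] at h; simp at h
      | UD q' r' => rw [peak, peak] at h; simp at h
  | A q ih =>
      intro c₂ h
      cases c₂ with
      | nil => rw [peak, peak] at h; simp at h
      | B q' => rw [peak, peak] at h; simp at h
      | A q' =>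
          rw [peak, peak] at h; simp only [List.cons.injEq, true_and] at h
          have := List.append_cancel_right h
          rw [ih q' this]
      | UD q' r' =>
          rw [peak, peak] at h; simp only [List.cons.injEq, true_and] at h
          rw [show ((-1:ℤ) :: peak r') = [-1] ++ peak r' from rfl, ← List.append_assoc] at h
          have h2 : (peak q ++ [-1]) ++ ([] : List ℤ) = (peak q' ++ [-1]) ++ peak r' := by
            simpa using h
          obtain ⟨-, h4⟩ := split_eq h2 (peak_A_pre q) (peak_A_sum q)
            (peak_A_pre q') (peak_A_sum q')
          exact absurd h4.symm (peak_ne_nil r')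
  | UD q r ihq ihr =>
      intro c₂ h
      cases c₂ with
      | nil => rw [peak, peak] at h; simp at h
      | B q' => rw [peak, peak] at h; simp at h
      | A q' =>
          rw [peak, peak] at h; simp only [List.cons.injEq, true_and] at h
          rw [show ((-1:ℤ) :: peak r) = [-1] ++ peak r from rfl, ← List.append_assoc] at h
          have h2 : (peak q ++ [-1]) ++ peak r = (peak q' ++ [-1]) ++ ([] : List ℤ) := by
            simpa using h
          obtain ⟨-, h4⟩ := split_eq h2 (peak_A_pre q) (peak_A_sum q)
            (peak_A_pre q') (peak_A_sum q')
          exact absurd h4 (peak_ne_nil r)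
      | UD q' r' =>
          rw [peak, peak] at h; simp only [List.cons.injEq, true_and] at h
          rw [show ((-1:ℤ) :: peak r) = [-1] ++ peak r from rfl, ← List.append_assoc] at h
          rw [show ((-1:ℤ) :: peak r') = [-1] ++ peak r' from rfl, ← List.append_assoc] at h
          obtain ⟨h3, h4⟩ := split_eq h (peak_A_pre q) (peak_A_sum q)
            (peak_A_pre q') (peak_A_sum q')
          have := List.append_cancel_right h3
          rw [ihq q' this, ihr r' h4]

lemma zig_A_pre (q : CM) :
    ∀ i < ((zig q).map Prod.snd ++ [1, -2]).length,
      0 ≤ pre ((zig q).map Prod.snd ++ [1, -2]) i := by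
  intro i hi
  rw [pre_append]
  simp only [List.length_append, List.length_cons, List.length_nil, List.length_map] at hi
  rcases le_or_gt i ((zig q).map Prod.snd).length with h | h
  · rw [Nat.sub_eq_zero_of_le h, pre_zero, add_zero]
    exact zig_pre q i
  · have hlen : ((zig q).map Prod.snd).length = (zig q).length := by simp
    have h1 : i - ((zig q).map Prod.snd).length = 1 := by omega
    rw [h1, pre_of_le (by omega), zig_sum]
    norm_num

lemma zig_A_sum (q : CM) : ((zig q).map Prod.snd ++ [1, -2]).sum = -1 := by
  simp

lemma zig_inj : ∀ c₁ c₂ : CM, zig c₁ = zig c₂ → c₁ = c₂ := by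
  intro c₁
  induction c₁ with
  | nil =>
      intro c₂ h
      cases c₂ with
      | nil => rfl
      | B q => rw [zig, zig] at h; simp at h
      | A q => rw [zig, zig] at h; simp at h
      | UD q r => rw [zig, zig] at h; simp at h
  | B q ih =>
      intro c₂ h
      cases c₂ with
      | nil => rw [zig, zig] at h; simp at h
      | B q' => rw [zig, zig] at h; simp at h; rw [ih q' h]
      | A q' => rw [zig, zig] at h; simp at h
      | UD q' r' => rw [zig, zig] at h; simp at h
  | A q ih =>
      intro c₂ h
      cases c₂ with
      | nil => rw [zig, zig] at h; simp at h
      | B q' => rw [zig, zig] at h; simp at h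
      | A q' => rw [zig, zig] at h; simp at h; rw [ih q' h]
      | UD q' r' => rw [zig, zig] at h; simp at h
  | UD q r ihq ihr =>
      intro c₂ h
      cases c₂ with
      | nil => rw [zig, zig] at h; simp at h
      | B q' => rw [zig, zig] at h; simp at h
      | A q' => rw [zig, zig] at h; simp at h
      | UD q' r' =>
          rw [zig, zig] at h; simp only [List.cons.injEq, true_and] at h
          -- h : zig q ++ (2,1)::(1,-2)::zig r = zig q' ++ (2,1)::(1,-2)::zig r'
          have hmap : (zig q).map Prod.snd ++ [(1:ℤ), -2] ++ (zig r).map Prod.snd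
              = (zig q').map Prod.snd ++ [(1:ℤ), -2] ++ (zig r').map Prod.snd := by
            have := congrArg (List.map Prod.snd) h
            simpa [List.map_append] using this
          obtain ⟨h3, -⟩ := split_eq hmap (zig_A_pre q) (zig_A_sum q)
            (zig_A_pre q') (zig_A_sum q')
          have hlen : (zig q).length = (zig q').length := by
            have := congrArg List.length h3
            simpa using this
          obtain ⟨h5, h6⟩ := List.append_inj h (by omega)
          simp only [List.cons.injEq, true_and] at h6
          rw [ihq q' h5, ihr r' h6]




lemma peak_surj : ∀ N (m : List ℤ), m.length ≤ N →
    (∀ x ∈ m, x = 1 ∨ x = -1 ∨ x = 0) → (∀ i, 0 ≤ pre m i) → m.sum = 0 →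
    List.Chain' (fun a b : ℤ => ¬ (a = 1 ∧ b = -1)) m → m ≠ [] →
    ∃ c : CM, peak c = m := by
  intro N
  induction N with
  | zero =>
      intro m hlen _ _ _ _ hne
      exact absurd (List.length_eq_zero_iff.mp (Nat.le_zero.mp hlen)) hne
  | succ N ih =>
      rintro m hlen hmem hpre hsum hch hne
      obtain ⟨x, t, rfl⟩ := List.exists_cons_of_ne_nil hne
      have hlent : t.length ≤ N := by simp at hlen; omega
      rcases hmem x (List.mem_cons_self) with rfl | rfl | rfl
      · -- x = 1 : first-return decomposition
        classical
        have hPex : ∃ j, 0 < j ∧ pre (1 :: t) j = 0 :=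
          ⟨(1 :: t).length, by simp, by rw [pre_length]; exact hsum⟩
        set m₀ := Nat.find hPex with hm₀
        obtain ⟨hm₀pos, hm₀val⟩ := Nat.find_spec hPex
        have hmin : ∀ j, 0 < j → j < m₀ → 1 ≤ pre (1 :: t) j := by
          intro j hj hjm
          have h1 := Nat.find_min hPex hjm
          have h2 := hpre j
          simp only [not_and] at h1
          have := h1 hj
          omega
        have hm₀le : m₀ ≤ (1 :: t).length :=
          Nat.find_min' hPex ⟨by simp, by rw [pre_length]; exact hsum⟩
        have hm₀2 : 2 ≤ m₀ := by
          rcases Nat.lt_or_ge m₀ 2 with h | h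
          · interval_cases m₀
            · omega
            · exfalso
              rw [← hm₀, show (1:ℕ) = 0 + 1 from rfl, pre_cons] at hm₀val
              simp at hm₀val
          · exact h
        set k := m₀ - 2 with hk
        have hkt : k ≤ t.length := by simp at hm₀le; omega
        set q := t.take k with hq
        have hqlen : q.length = k := by rw [hq, List.length_take]; omega
        have hrest : t.drop k ≠ [] := by
          intro hcon
          have h1 : (t.drop k).length = t.length - k := List.length_drop
          rw [hcon] at h1
          simp at h1
          simp at hm₀le
          omega
        obtain ⟨y, r, hyr⟩ := List.exists_cons_of_ne_nil hrest
        have ht : t = q ++ y :: r := by rw [hq, ← hyr, List.take_append_drop]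
        have hq_pre_le : ∀ i, i ≤ k → pre (1 :: t) (i+1) = 1 + pre q i := by
          intro i hik
          rw [ht, pre_cons, pre_append, hqlen, Nat.sub_eq_zero_of_le hik, pre_zero, add_zero]
        have hqpre : ∀ i, 0 ≤ pre q i := by
          intro i
          rcases le_or_gt i k with h | h
          · rcases Nat.eq_zero_or_pos i with rfl | hpos
            · simp
            · have h2 := hmin (i+1) (by omega) (by omega)
              rw [hq_pre_le i h] at h2
              linarith
          · rw [pre_of_le (by omega)]
            rcases Nat.eq_zero_or_pos k with h0 | h0
            · rw [hq, h0]; simp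
            · have h2 := hmin (k+1) (by omega) (by omega)
              rw [hq_pre_le k le_rfl, ← hqlen, pre_length] at h2
              linarith
        have hqsum_pre : pre (1 :: t) (k+1) = 1 + q.sum := by
          rw [hq_pre_le k le_rfl, ← hqlen, pre_length]
        have hm₀eq : pre (1 :: t) m₀ = 1 + q.sum + y := by
          rw [ht, show m₀ = (k + 1) + 1 by omega, pre_cons, pre_append, hqlen,
            pre_of_le (by omega), show k + 1 - k = 0 + 1 by omega, pre_cons, pre_zero, add_zero]
          ring
        have hSq : 0 ≤ q.sum := by
          have h2 := hmin (k+1) (by omega) (by omega)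
          rw [hqsum_pre] at h2; linarith
        have hy : y = -1 ∧ q.sum = 0 := by
          have hymem : y = 1 ∨ y = -1 ∨ y = 0 := hmem y (by rw [ht]; simp)
          have h2 : 1 + q.sum + y = 0 := by rw [← hm₀eq]; exact hm₀val
          rcases hymem with rfl | rfl | rfl <;> omega
        obtain ⟨rfl, hqsum⟩ := hy
        have hqne : q ≠ [] := by
          intro hcon
          rw [ht, hcon, List.nil_append, List.Chain', List.isChain_cons] at hch
          exact hch.1 (-1) rfl ⟨rfl, rfl⟩
        have hcht : List.Chain' (fun a b : ℤ => ¬ (a = 1 ∧ b = -1)) t :=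
          (List.isChain_cons.mp hch).2
        rw [ht, List.Chain', List.isChain_append] at hcht
        obtain ⟨hchq, hchyr, -⟩ := hcht
        have hchr := (List.isChain_cons.mp hchyr).2
        have hrsum : r.sum = 0 := by
          have h2 : ((1:ℤ) :: t).sum = 0 := hsum
          rw [ht] at h2
          simp at h2
          linarith
        have hrpre : ∀ i, 0 ≤ pre r i := by
          intro i
          rcases Nat.eq_zero_or_pos i with rfl | hpos
          · simp
          · obtain ⟨j, rfl⟩ : ∃ j, i = j + 1 := ⟨i - 1, by omega⟩
            have hcalc : pre (1 :: t) (m₀ + j + 1) = pre r (j + 1) := by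
              rw [ht, show m₀ + j + 1 = (k + (j + 2)) + 1 by omega, pre_cons, pre_append, hqlen,
                pre_of_le (by omega), hqsum, show k + (j + 2) - k = (j + 1) + 1 by omega, pre_cons]
              ring
            have := hpre (m₀ + j + 1)
            rw [hcalc] at this
            exact this
        have hqmem : ∀ z ∈ q, z = 1 ∨ z = -1 ∨ z = 0 := by
          intro z hz
          exact hmem z (by rw [ht]; simp; tauto)
        obtain ⟨cq, hcq⟩ := ih q (by omega) hqmem hqpre hqsum hchq hqne
        rcases eq_or_ne r [] with rfl | hrne
        · refine ⟨CM.A cq, ?_⟩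
          rw [peak, hcq, ht]
        · have hrlen : r.length ≤ N := by
            have := congrArg List.length ht
            simp at this
            omega
          have hrmem : ∀ z ∈ r, z = 1 ∨ z = -1 ∨ z = 0 := by
            intro z hz
            exact hmem z (by rw [ht]; simp; tauto)
          obtain ⟨cr, hcr⟩ := ih r hrlen hrmem hrpre hrsum hchr hrne
          refine ⟨CM.UD cq cr, ?_⟩
          rw [peak, hcq, hcr, ← ht]
      · -- x = -1 : impossible
        have := hpre 1
        rw [show (1:ℕ) = 0 + 1 from rfl, pre_cons] at this
        simp at this
      · -- x = 0
        rcases eq_or_ne t [] with rfl | htne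
        · exact ⟨CM.nil, rfl⟩
        · have htmem : ∀ z ∈ t, z = 1 ∨ z = -1 ∨ z = 0 := fun z hz => hmem z (by simp [hz])
          have htpre : ∀ i, 0 ≤ pre t i := by
            intro i
            have := hpre (i+1)
            rw [pre_cons] at this
            linarith
          have htsum : t.sum = 0 := by simpa using hsum
          obtain ⟨c, hc⟩ := ih t hlent htmem htpre htsum (List.isChain_cons.mp hch).2 htne
          exact ⟨CM.B c, by rw [peak, hc]⟩




lemma zig_surj : ∀ N (p : List (ℤ × ℤ)), p.length ≤ N →
    (∀ s ∈ p, s ∈ KnightSteps) → (∀ i, 0 ≤ pre (p.map Prod.snd) i) →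
    List.Chain' (fun a b : ℤ × ℤ => a.2 * b.2 < 0) p → (p.map Prod.snd).sum = 0 →
    ∃ c : CM, zig c = p := by
  intro N
  induction N with
  | zero =>
      intro p hlen _ _ _ _
      rw [List.length_eq_zero_iff.mp (Nat.le_zero.mp hlen)]
      exact ⟨CM.nil, rfl⟩
  | succ N ih =>
      rintro (_ | ⟨s, t⟩) hlen hmem hpre hch hsum
      · exact ⟨CM.nil, rfl⟩
      rcases t with _ | ⟨s₂, t₂⟩
      · -- single step: sum = s.2 ≠ 0
        exfalso
        simp at hsum
        rcases (mem_knight_iff s).mp (hmem s (by simp)) with rfl | rfl | rfl | rfl <;> simp at hsum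
      have hlent : t₂.length ≤ N := by simp at hlen; omega
      have hs2 : 0 ≤ s.2 := by
        have := hpre 1
        rw [show (s :: s₂ :: t₂).map Prod.snd = s.2 :: s₂.2 :: t₂.map Prod.snd by simp,
          show (1:ℕ) = 0 + 1 from rfl, pre_cons] at this
        simpa using this
      have hrel : s.2 * s₂.2 < 0 := (List.isChain_cons.mp hch).1 s₂ rfl
      have hch2 : List.Chain' (fun a b : ℤ × ℤ => a.2 * b.2 < 0) (s₂ :: t₂) :=
        (List.isChain_cons.mp hch).2
      have hcht₂ : List.Chain' (fun a b : ℤ × ℤ => a.2 * b.2 < 0) t₂ :=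
        (List.isChain_cons.mp hch2).2
      rcases (mem_knight_iff s).mp (hmem s (by simp)) with rfl | rfl | rfl | rfl
      pick_goal 2
      · exfalso; simp at hs2
      pick_goal 3
      · exfalso; simp at hs2
      · -- s = (2,1)
        have hs₂neg : s₂.2 < 0 := by
          by_contra hcon
          push_neg at hcon
          simp at hrel
          nlinarith
        rcases (mem_knight_iff s₂).mp (hmem s₂ (by simp)) with rfl | rfl | rfl | rfl
        · exfalso; simp at hs₂neg
        · -- (2,1),(2,-1) : A-pair
          have hpre' : ∀ i, 0 ≤ pre (t₂.map Prod.snd) i := by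
            intro i
            have := hpre (i + 2)
            rw [show ((2,1) :: (2,-1) :: t₂ : List (ℤ×ℤ)).map Prod.snd
              = 1 :: -1 :: t₂.map Prod.snd by simp, pre_cons, pre_cons] at this
            linarith
          have hsum' : (t₂.map Prod.snd).sum = 0 := by
            rw [show ((2,1) :: (2,-1) :: t₂ : List (ℤ×ℤ)).map Prod.snd
              = 1 :: -1 :: t₂.map Prod.snd by simp] at hsum
            simp at hsum
            linarith
          obtain ⟨c, hc⟩ := ih t₂ hlent (fun z hz => hmem z (by simp [hz])) hpre' hcht₂ hsum'
          exact ⟨CM.A c, by rw [zig, hc]⟩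
        · exfalso; simp at hs₂neg
        · -- (2,1),(1,-2) : dips below
          exfalso
          have := hpre 2
          rw [show ((2,1) :: (1,-2) :: t₂ : List (ℤ×ℤ)).map Prod.snd
            = 1 :: -2 :: t₂.map Prod.snd by simp,
            show (2:ℕ) = (0 + 1) + 1 from rfl, pre_cons, pre_cons] at this
          simp at this
      · -- s = (1,2)
        have hs₂neg : s₂.2 < 0 := by
          by_contra hcon
          push_neg at hcon
          simp at hrel
          nlinarith
        rcases (mem_knight_iff s₂).mp (hmem s₂ (by simp)) with rfl | rfl | rfl | rfl
        · exfalso; simp at hs₂neg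
        · -- (1,2),(2,-1) : U-pair, first-return decomposition
          classical
          set y : List ℤ := ((1,2) :: (2,-1) :: t₂ : List (ℤ×ℤ)).map Prod.snd with hy
          have hyrw : y = 2 :: -1 :: t₂.map Prod.snd := by simp [hy]
          have hPex : ∃ j, 0 < j ∧ pre y j = 0 :=
            ⟨y.length, by simp [hyrw], by rw [pre_length]; exact hsum⟩
          obtain ⟨m₀, ⟨hm₀pos, hm₀val⟩, hminN, hm₀le⟩ :
              ∃ m₀, (0 < m₀ ∧ pre y m₀ = 0) ∧ (∀ j < m₀, ¬ (0 < j ∧ pre y j = 0)) ∧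
                m₀ ≤ y.length :=
            ⟨Nat.find hPex, Nat.find_spec hPex, fun j hj => Nat.find_min hPex hj,
              Nat.find_min' hPex ⟨by simp [hyrw], by rw [pre_length]; exact hsum⟩⟩
          have hmin : ∀ j, 0 < j → j < m₀ → 1 ≤ pre y j := by
            intro j hj hjm
            have h1 := hminN j hjm
            have h2 := hpre j
            simp only [not_and] at h1
            have := h1 hj
            omega
          have hylen : y.length = t₂.length + 2 := by simp [hyrw]
          rcases eq_or_ne t₂ [] with rfl | ht₂ne
          · exfalso
            rw [hyrw] at hsum
            simp at hsum
          obtain ⟨s₃, t₃, rfl⟩ := List.exists_cons_of_ne_nil ht₂ne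
          have hLL : (s₃ :: t₃).length = t₃.length + 1 := by simp
          have hs₃pos : 0 < s₃.2 := by
            have hrel2 : (2,-1).2 * s₃.2 < 0 := (List.isChain_cons.mp hch2).1 s₃ rfl
            simp at hrel2
            exact hrel2
          have hm₀4 : 4 ≤ m₀ := by
            have h1 : pre y 1 = 2 := by rw [hyrw, show (1:ℕ) = 0+1 from rfl, pre_cons]; simp
            have h2 : pre y 2 = 1 := by
              rw [hyrw, show (2:ℕ) = (0+1)+1 from rfl, pre_cons, pre_cons]; simp
            have h3 : pre y 3 = 1 + s₃.2 := by
              rw [hyrw, show ((s₃ :: t₃ : List (ℤ×ℤ)).map Prod.snd) = s₃.2 :: t₃.map Prod.snd by simp,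
                show (3:ℕ) = ((0+1)+1)+1 from rfl, pre_cons, pre_cons, pre_cons]
              simp only [pre_zero, add_zero]
              ring
            by_contra hcon
            push_neg at hcon
            have hc3 : m₀ = 1 ∨ m₀ = 2 ∨ m₀ = 3 := by omega
            rcases hc3 with h | h | h <;> rw [h] at hm₀val <;> omega
          obtain ⟨k, hk⟩ : ∃ k, m₀ = k + 4 := ⟨m₀ - 4, by omega⟩
          have hkt : k + 2 ≤ (s₃ :: t₃).length := by
            have h5 : m₀ ≤ (s₃ :: t₃).length + 2 := by rw [← hylen]; exact hm₀le
            omega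
          set inner := (s₃ :: t₃).take k with hinner
          have hinlen : inner.length = k := by
            rw [hinner, List.length_take]
            omega
          have hdroplen : ((s₃ :: t₃).drop k).length = (s₃ :: t₃).length - k :=
            List.length_drop
          have hdropne : (s₃ :: t₃).drop k ≠ [] := by
            intro hcon
            rw [hcon] at hdroplen
            simp only [List.length_nil] at hdroplen
            omega
          obtain ⟨d₁, rest₂, hd₁⟩ := List.exists_cons_of_ne_nil hdropne
          have hrest₂ne : rest₂ ≠ [] := by
            intro hcon
            have h6 := congrArg List.length hd₁
            rw [hcon, hdroplen] at h6
            simp only [List.length_cons, List.length_nil] at h6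
            omega
          obtain ⟨d₂, tail, hd₂⟩ := List.exists_cons_of_ne_nil hrest₂ne
          have ht : (s₃ :: t₃) = inner ++ d₁ :: d₂ :: tail := by
            rw [hinner, ← hd₂, ← hd₁, List.take_append_drop]
          set yi := inner.map Prod.snd with hyi
          set ytail := tail.map Prod.snd with hytail
          have hyilen : yi.length = k := by simp [hyi, hinlen]
          have hyfull : y = 2 :: -1 :: (yi ++ d₁.2 :: d₂.2 :: ytail) := by
            rw [hyrw, ht]
            simp [hyi, hytail]
          have hpre_le : ∀ i, i ≤ k → pre y (i+2) = 1 + pre yi i := by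
            intro i hik
            rw [hyfull, show i + 2 = (i+1)+1 by omega, pre_cons, pre_cons, pre_append, hyilen,
              Nat.sub_eq_zero_of_le hik, pre_zero, add_zero]
            ring
          have hipre : ∀ i, 0 ≤ pre yi i := by
            intro i
            rcases le_or_gt i k with h | h
            · rcases Nat.eq_zero_or_pos i with rfl | hpos
              · simp
              · have h2 := hmin (i+2) (by omega) (by omega)
                rw [hpre_le i h] at h2
                linarith
            · rw [pre_of_le (by omega)]
              have h2 := hmin (k+2) (by omega) (by omega)
              rw [hpre_le k le_rfl, ← hyilen, pre_length] at h2
              linarith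
          have hSq : 0 ≤ yi.sum := by
            have h2 := hmin (k+2) (by omega) (by omega)
            rw [hpre_le k le_rfl, ← hyilen, pre_length] at h2
            linarith
          have h_k3 : pre y (k+3) = 1 + yi.sum + d₁.2 := by
            rw [hyfull, show k + 3 = ((k+1)+1)+1 by omega, pre_cons, pre_cons, pre_append, hyilen,
              pre_of_le (by omega), show k + 1 - k = 0 + 1 by omega, pre_cons, pre_zero]
            ring
          have h_k4 : 1 + yi.sum + d₁.2 + d₂.2 = 0 := by
            have hcalc : pre y m₀ = 1 + yi.sum + d₁.2 + d₂.2 := by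
              rw [hyfull, show m₀ = ((k+2)+1)+1 by omega, pre_cons, pre_cons, pre_append, hyilen,
                pre_of_le (by omega), show k + 2 - k = (0+1)+1 by omega, pre_cons, pre_cons,
                pre_zero]
              ring
            rw [← hcalc]
            exact hm₀val
          have h_k3ge : 1 ≤ 1 + yi.sum + d₁.2 := by
            have h2 := hmin (k+3) (by omega) (by omega)
            rw [h_k3] at h2
            linarith
          have hd₂neg : d₂.2 < 0 := by linarith
          have hd₁d₂ : d₁.2 * d₂.2 < 0 := by
            have hchtt : List.Chain' (fun a b : ℤ × ℤ => a.2 * b.2 < 0) (d₁ :: d₂ :: tail) := by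
              have := hcht₂
              rw [ht, List.Chain', List.isChain_append] at this
              exact this.2.1
            exact (List.isChain_cons.mp hchtt).1 d₂ rfl
          have hd₁pos : 0 < d₁.2 := by
            rcases mul_neg_iff.mp hd₁d₂ with ⟨h, _⟩ | ⟨_, h⟩
            · exact h
            · linarith
          have hd₁mem : d₁ ∈ KnightSteps := hmem d₁ (by rw [ht]; simp)
          have hd₂mem : d₂ ∈ KnightSteps := hmem d₂ (by rw [ht]; simp)
          have hd : d₁ = ((2,1) : ℤ × ℤ) ∧ d₂ = ((1,-2) : ℤ × ℤ) ∧ yi.sum = 0 := by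
            rcases (mem_knight_iff d₁).mp hd₁mem with rfl | rfl | rfl | rfl <;>
              rcases (mem_knight_iff d₂).mp hd₂mem with rfl | rfl | rfl | rfl <;>
              simp at hd₁pos hd₂neg h_k4 h_k3ge ⊢ <;> omega
          obtain ⟨rfl, rfl, hyisum⟩ := hd
          have hchsplit := hcht₂
          rw [ht, List.Chain', List.isChain_append] at hchsplit
          have hchin : List.Chain' (fun a b : ℤ × ℤ => a.2 * b.2 < 0) inner := hchsplit.1
          have hchtail : List.Chain' (fun a b : ℤ × ℤ => a.2 * b.2 < 0) tail :=
            (List.isChain_cons.mp (List.isChain_cons.mp hchsplit.2.1).2).2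
          have htailpre : ∀ i, 0 ≤ pre ytail i := by
            intro i
            have hcalc : pre y (m₀ + i) = pre ytail i := by
              rw [hyfull, show m₀ + i = ((k + (i+2))+1)+1 by omega, pre_cons, pre_cons,
                pre_append, hyilen, pre_of_le (by omega), hyisum,
                show k + (i + 2) - k = (i + 1) + 1 by omega, pre_cons, pre_cons]
              ring
            have := hpre (m₀ + i)
            rw [hcalc] at this
            exact this
          have htailsum : ytail.sum = 0 := by
            have h2 : y.sum = 0 := hsum
            rw [hyfull] at h2
            simp at h2
            rw [hyisum] at h2
            linarith
          have hinlen' : inner.length ≤ N := by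
            have h7 : ((1,2) :: (2,-1) :: s₃ :: t₃ : List (ℤ×ℤ)).length = t₃.length + 3 := by simp
            simp only [List.length_cons] at hkt
            rw [h7] at hlen
            omega
          have htaillen : tail.length ≤ N := by
            have h8 := congrArg List.length ht
            simp only [List.length_cons, List.length_append] at h8
            have h7 : ((1,2) :: (2,-1) :: s₃ :: t₃ : List (ℤ×ℤ)).length = t₃.length + 3 := by simp
            rw [h7] at hlen
            omega
          obtain ⟨c₁, hc₁⟩ := ih inner hinlen'
            (fun z hz => hmem z (by rw [ht]; simp; tauto)) hipre hchin hyisum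
          obtain ⟨c₂, hc₂⟩ := ih tail htaillen
            (fun z hz => hmem z (by rw [ht]; simp; tauto)) htailpre hchtail htailsum
          refine ⟨CM.UD c₁ c₂, ?_⟩
          rw [zig, hc₁, hc₂, ← ht]
        · exfalso; simp at hs₂neg
        · -- (1,2),(1,-2) : B-pair
          have hpre' : ∀ i, 0 ≤ pre (t₂.map Prod.snd) i := by
            intro i
            have := hpre (i + 2)
            rw [show ((1,2) :: (1,-2) :: t₂ : List (ℤ×ℤ)).map Prod.snd
              = 2 :: -2 :: t₂.map Prod.snd by simp, pre_cons, pre_cons] at this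
            linarith
          have hsum' : (t₂.map Prod.snd).sum = 0 := by
            rw [show ((1,2) :: (1,-2) :: t₂ : List (ℤ×ℤ)).map Prod.snd
              = 2 :: -2 :: t₂.map Prod.snd by simp] at hsum
            simp at hsum
            linarith
          obtain ⟨c, hc⟩ := ih t₂ hlent (fun z hz => hmem z (by simp [hz])) hpre' hcht₂ hsum'
          exact ⟨CM.B c, by rw [zig, hc]⟩



/-! ### Counting -/

def enc3 : ℤ → Fin 3 := fun x => if x = 1 then 1 else if x = -1 then 2 else 0

lemma enc3_inj {x y : ℤ} (hx : x = 1 ∨ x = -1 ∨ x = 0) (hy : y = 1 ∨ y = -1 ∨ y = 0)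
    (h : enc3 x = enc3 y) : x = y := by
  rcases hx with rfl | rfl | rfl <;> rcases hy with rfl | rfl | rfl <;> simp [enc3] at h ⊢

instance fiber_finite (n : ℕ) : Finite {c : CM // wt c = n} := by
  have hinj : Function.Injective
      (fun c : {c : CM // wt c = n} => (fun i : Fin (n+1) => enc3 ((peak c.1).getD i 0))) := by
    intro c₁ c₂ h
    have hlen1 : (peak c₁.1).length = n + 1 := by rw [peak_len, c₁.2]
    have hlen2 : (peak c₂.1).length = n + 1 := by rw [peak_len, c₂.2]
    have hpk : peak c₁.1 = peak c₂.1 := by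
      apply List.ext_getElem (by rw [hlen1, hlen2])
      intro i h₁ h₂
      have := congrFun h ⟨i, by omega⟩
      simp only at this
      rw [List.getD_eq_getElem _ _ h₁, List.getD_eq_getElem _ _ h₂] at this
      exact enc3_inj (peak_mem _ _ (List.getElem_mem h₁)) (peak_mem _ _ (List.getElem_mem h₂)) this
    exact Subtype.ext (peak_inj _ _ hpk)
  exact Finite.of_injective _ hinj

noncomputable def fib (n : ℕ) : ℕ := Nat.card {c : CM // wt c = n}

lemma card_sigma' {ι : Type*} [Fintype ι] (f : ι → Type*) [∀ i, Finite (f i)] :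
    Nat.card (Σ i, f i) = ∑ i, Nat.card (f i) := by
  haveI := fun i => Fintype.ofFinite (f i)
  simp [Nat.card_eq_fintype_card, Fintype.card_sigma]

lemma fib_zero : fib 0 = 1 := by
  rw [fib]
  have : Unique {c : CM // wt c = 0} := by
    refine ⟨⟨⟨CM.nil, rfl⟩⟩, ?_⟩
    rintro ⟨c, hc⟩
    cases c with
    | nil => rfl
    | B q => exact absurd hc (by simp [wt])
    | A q => exact absurd hc (by simp [wt])
    | UD q r => exact absurd hc (by simp [wt])
  exact Nat.card_unique

lemma fib_one : fib 1 = 1 := by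
  have hbij : Function.Bijective
      (fun c : {c : CM // wt c = 0} => (⟨CM.B c.1, by simp [wt, c.2]⟩ : {c : CM // wt c = 1})) := by
    constructor
    · rintro ⟨c₁, h₁⟩ ⟨c₂, h₂⟩ h
      simp only [Subtype.mk.injEq, CM.B.injEq] at h
      exact Subtype.ext h
    · rintro ⟨c, hc⟩
      cases c with
      | nil => exact absurd hc (by simp [wt])
      | B q => exact ⟨⟨q, by simp [wt] at hc; omega⟩, rfl⟩
      | A q => exact absurd hc (by simp [wt]; omega)
      | UD q r => exact absurd hc (by simp [wt]; omega)
  rw [fib, ← Nat.card_congr (Equiv.ofBijective _ hbij), ← fib, fib_zero]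

lemma fib_two : fib 2 = 2 := by
  have hbij : Function.Bijective
      (fun x : {c : CM // wt c = 1} ⊕ {c : CM // wt c = 0} =>
        (Sum.elim
          (fun c : {c : CM // wt c = 1} => (⟨CM.B c.1, by simp [wt, c.2]⟩ : {c : CM // wt c = 2}))
          (fun c : {c : CM // wt c = 0} => (⟨CM.A c.1, by simp [wt, c.2]⟩ : {c : CM // wt c = 2}))
          x)) := by
    constructor
    · rintro (⟨c₁, h₁⟩ | ⟨c₁, h₁⟩) (⟨c₂, h₂⟩ | ⟨c₂, h₂⟩) h <;>
        simp only [Sum.elim_inl, Sum.elim_inr, Subtype.mk.injEq, CM.B.injEq, CM.A.injEq] at h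
      · exact congrArg Sum.inl (Subtype.ext h)
      · exact absurd h (by simp)
      · exact absurd h (by simp)
      · exact congrArg Sum.inr (Subtype.ext h)
    · rintro ⟨c, hc⟩
      cases c with
      | nil => exact absurd hc (by simp [wt])
      | B q => exact ⟨Sum.inl ⟨q, by simp [wt] at hc; omega⟩, rfl⟩
      | A q => exact ⟨Sum.inr ⟨q, by simp [wt] at hc; omega⟩, rfl⟩
      | UD q r => exact absurd hc (by simp [wt]; omega)
  rw [fib, ← Nat.card_congr (Equiv.ofBijective _ hbij), Nat.card_sum, ← fib, ← fib,
    fib_zero, fib_one]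

lemma fib_rec (n : ℕ) :
    fib (n + 3) = fib (n + 2) + fib (n + 1) + ∑ i ∈ Finset.range (n + 1), fib i * fib (n - i) := by
  classical
  have hbij : Function.Bijective
      (fun x : {c : CM // wt c = n + 2} ⊕ {c : CM // wt c = n + 1} ⊕
          (Σ i : Fin (n + 1), {c : CM // wt c = (i : ℕ)} × {c : CM // wt c = n - (i : ℕ)}) =>
        (Sum.elim
          (fun c : {c : CM // wt c = n + 2} =>
            (⟨CM.B c.1, by simp [wt, c.2]; omega⟩ : {c : CM // wt c = n + 3}))
          (Sum.elim
            (fun c : {c : CM // wt c = n + 1} =>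
              (⟨CM.A c.1, by simp [wt, c.2]; omega⟩ : {c : CM // wt c = n + 3}))
            (fun z : (Σ i : Fin (n + 1), {c : CM // wt c = (i : ℕ)} × {c : CM // wt c = n - (i : ℕ)}) =>
              (⟨CM.UD z.2.1.1 z.2.2.1, by
                have h1 := z.2.1.2
                have h2 := z.2.2.2
                have h3 := z.1.isLt
                simp [wt, h1, h2]
                omega⟩ : {c : CM // wt c = n + 3})))
          x)) := by
    constructor
    · rintro (⟨c₁, h₁⟩ | ⟨c₁, h₁⟩ | ⟨i₁, ⟨q₁, hq₁⟩, ⟨r₁, hr₁⟩⟩)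
        (⟨c₂, h₂⟩ | ⟨c₂, h₂⟩ | ⟨i₂, ⟨q₂, hq₂⟩, ⟨r₂, hr₂⟩⟩) h <;>
        simp only [Sum.elim_inl, Sum.elim_inr, Subtype.mk.injEq, CM.B.injEq, CM.A.injEq,
          CM.UD.injEq] at h
      · exact congrArg Sum.inl (Subtype.ext h)
      · exact absurd h (by simp)
      · exact absurd h (by simp)
      · exact absurd h (by simp)
      · exact congrArg Sum.inr (congrArg Sum.inl (Subtype.ext h))
      · exact absurd h (by simp)
      · exact absurd h (by simp)
      · exact absurd h (by simp)
      · obtain ⟨hq, hr⟩ := h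
        have hii : i₁ = i₂ := by
          apply Fin.ext
          rw [← hq₁, ← hq₂, hq]
        subst hii
        subst hq
        subst hr
        rfl
    · rintro ⟨c, hc⟩
      cases c with
      | nil => exact absurd hc (by simp [wt])
      | B q => exact ⟨Sum.inl ⟨q, by simp [wt] at hc; omega⟩, rfl⟩
      | A q => exact ⟨Sum.inr (Sum.inl ⟨q, by simp [wt] at hc; omega⟩), rfl⟩
      | UD q r =>
          have hwq : wt q ≤ n := by simp [wt] at hc; omega
          refine ⟨Sum.inr (Sum.inr ⟨⟨wt q, by omega⟩, ⟨q, rfl⟩, ⟨r, ?_⟩⟩), rfl⟩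
          simp only [Fin.val_mk]
          simp [wt] at hc
          omega
  have hsum : (∑ i : Fin (n+1),
      Nat.card ({c : CM // wt c = (i:ℕ)} × {c : CM // wt c = n - (i:ℕ)}))
      = ∑ i ∈ Finset.range (n+1), fib i * fib (n - i) := by
    rw [← Fin.sum_univ_eq_sum_range (fun i => fib i * fib (n - i)) (n + 1)]
    apply Finset.sum_congr rfl
    intro i _
    rw [Nat.card_prod, ← fib, ← fib]
  rw [fib, ← Nat.card_congr (Equiv.ofBijective _ hbij), Nat.card_sum, Nat.card_sum,
    card_sigma', hsum, ← fib, ← fib, add_assoc]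



lemma fib_3 : fib 3 = 4 := by
  have h := fib_rec 0
  norm_num [Finset.sum_range_succ, fib_zero, fib_one, fib_two] at h
  exact h

lemma fib_4 : fib 4 = 8 := by
  have h := fib_rec 1
  norm_num [Finset.sum_range_succ, fib_zero, fib_one, fib_two, fib_3] at h
  exact h

lemma fib_5 : fib 5 = 17 := by
  have h := fib_rec 2
  norm_num [Finset.sum_range_succ, fib_zero, fib_one, fib_two, fib_3, fib_4] at h
  exact h

lemma fib_6 : fib 6 = 37 := by
  have h := fib_rec 3
  norm_num [Finset.sum_range_succ, fib_zero, fib_one, fib_two, fib_3, fib_4, fib_5] at h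
  exact h

lemma fib_7 : fib 7 = 82 := by
  have h := fib_rec 4
  norm_num [Finset.sum_range_succ, fib_zero, fib_one, fib_two, fib_3, fib_4, fib_5, fib_6] at h
  exact h

lemma fib_8 : fib 8 = 185 := by
  have h := fib_rec 5
  norm_num [Finset.sum_range_succ, fib_zero, fib_one, fib_two, fib_3, fib_4, fib_5, fib_6,
    fib_7] at h
  exact h

lemma fib_9 : fib 9 = 423 := by
  have h := fib_rec 6
  norm_num [Finset.sum_range_succ, fib_zero, fib_one, fib_two, fib_3, fib_4, fib_5, fib_6,
    fib_7, fib_8] at h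
  exact h

lemma fib_10 : fib 10 = 978 := by
  have h := fib_rec 7
  norm_num [Finset.sum_range_succ, fib_zero, fib_one, fib_two, fib_3, fib_4, fib_5, fib_6,
    fib_7, fib_8, fib_9] at h
  exact h

lemma count_zig (n : ℕ) : zigzagCount (2 * (n : ℤ)) = fib n := by
  have hbij : Function.Bijective
      (fun c : {c : CM // wt c = n} =>
        (⟨zig c.1, zig_is_path c.1, by rw [zig_size, c.2]⟩ :
          {p : List (ℤ × ℤ) // IsZigzagKnightPath p ∧ pathSize p = 2 * (n : ℤ)})) := by
    constructor
    · rintro ⟨c₁, h₁⟩ ⟨c₂, h₂⟩ h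
      simp only [Subtype.mk.injEq] at h
      exact Subtype.ext (zig_inj _ _ h)
    · rintro ⟨p, hp, hs⟩
      obtain ⟨c, rfl⟩ := zig_surj p.length p le_rfl hp.1.1.1
        ((nonnegHeights_iff p).mp hp.1.1.2) hp.1.2 hp.2
      have hw : wt c = n := by
        have := hs
        rw [zig_size] at this
        exact_mod_cast mul_left_cancel₀ (two_ne_zero) this
      exact ⟨⟨c, hw⟩, rfl⟩
  rw [zigzagCount, ← Nat.card_congr (Equiv.ofBijective _ hbij), ← fib]

lemma count_peak (n : ℕ) :
    Nat.card {m : List ℤ // IsPeaklessMotzkin m ∧ m.length = n + 1} = fib n := by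
  have hbij : Function.Bijective
      (fun c : {c : CM // wt c = n} =>
        (⟨peak c.1, peak_is_peakless c.1, by rw [peak_len, c.2]⟩ :
          {m : List ℤ // IsPeaklessMotzkin m ∧ m.length = n + 1})) := by
    constructor
    · rintro ⟨c₁, h₁⟩ ⟨c₂, h₂⟩ h
      simp only [Subtype.mk.injEq] at h
      exact Subtype.ext (peak_inj _ _ h)
    · rintro ⟨m, hm, hl⟩
      have hne : m ≠ [] := by
        intro hcon
        rw [hcon] at hl
        simp at hl
      obtain ⟨c, rfl⟩ := peak_surj m.length m le_rfl hm.1 (fun i => hm.2.1 i) hm.2.2.1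
        hm.2.2.2 hne
      have hw : wt c = n := by
        rw [peak_len] at hl
        omega
      exact ⟨⟨c, hw⟩, rfl⟩
  rw [← Nat.card_congr (Equiv.ofBijective _ hbij), ← fib]

end CM
end S9

/-- zigzag knight's paths of size 2n ending on the x-axis are
equinumerous with peakless Motzkin paths of length n+1 (the generalized Catalan
numbers); for n = 0,…,10 these numbers are 1,1,2,4,8,17,37,82,185,423,978; and
there is no zigzag knight's path of odd size ending on the x-axis. -/
theorem stmt9 :
    (∀ n : ℕ, zigzagCount (2 * n)
        = Nat.card {m : List ℤ // IsPeaklessMotzkin m ∧ m.length = n + 1}) ∧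
    (zigzagCount 0 = 1 ∧ zigzagCount 2 = 1 ∧ zigzagCount 4 = 2 ∧ zigzagCount 6 = 4 ∧
      zigzagCount 8 = 8 ∧ zigzagCount 10 = 17 ∧ zigzagCount 12 = 37 ∧
      zigzagCount 14 = 82 ∧ zigzagCount 16 = 185 ∧ zigzagCount 18 = 423 ∧
      zigzagCount 20 = 978) ∧
    (¬ ∃ p : List (ℤ × ℤ), IsZigzagKnightPath p ∧ Odd (pathSize p)) := by
  refine ⟨?_, ?_, ?_⟩
  · intro n
    rw [S9.CM.count_zig n]
    exact (S9.CM.count_peak n).symm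
  · refine ⟨?_, ?_, ?_, ?_, ?_, ?_, ?_, ?_, ?_, ?_, ?_⟩
    · have h := S9.CM.count_zig 0; norm_num [S9.CM.fib_zero] at h; exact h
    · have h := S9.CM.count_zig 1; norm_num [S9.CM.fib_one] at h; exact h
    · have h := S9.CM.count_zig 2; norm_num [S9.CM.fib_two] at h; exact h
    · have h := S9.CM.count_zig 3; norm_num [S9.CM.fib_3] at h; exact h
    · have h := S9.CM.count_zig 4; norm_num [S9.CM.fib_4] at h; exact h
    · have h := S9.CM.count_zig 5; norm_num [S9.CM.fib_5] at h; exact h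
    · have h := S9.CM.count_zig 6; norm_num [S9.CM.fib_6] at h; exact h
    · have h := S9.CM.count_zig 7; norm_num [S9.CM.fib_7] at h; exact h
    · have h := S9.CM.count_zig 8; norm_num [S9.CM.fib_8] at h; exact h
    · have h := S9.CM.count_zig 9; norm_num [S9.CM.fib_9] at h; exact h
    · have h := S9.CM.count_zig 10; norm_num [S9.CM.fib_10] at h; exact h
  · rintro ⟨p, hp, hodd⟩
    obtain ⟨c, rfl⟩ := S9.CM.zig_surj p.length p le_rfl hp.1.1.1
      ((S9.nonnegHeights_iff p).mp hp.1.1.2) hp.1.2 hp.2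
    rw [S9.CM.zig_size] at hodd
    exact (Int.not_odd_iff_even.mpr (even_two_mul _)) hodd
end

section
/- For every k ≥ 3 and n ≥ 0, the number of partial zigzag knight's paths of size n ending at height k whose last step is an up-step equals the number of partial zigzag knight's paths of size n−2 ending at height k−1 whose last step is a down-step, plus the number of partial zigzag knight's paths of size n−1 ending at height k−2 whose last step is a down-step (counts with negative size being 0). -/
open List

lemma knight_cases {s : ℤ × ℤ} (h : s ∈ KnightSteps) :
    s = (2,1) ∨ s = (2,-1) ∨ s = (1,2) ∨ s = (1,-2) := by
  simpa [KnightSteps] using h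

lemma pathHeight_append (q : List (ℤ × ℤ)) (s : ℤ × ℤ) :
    pathHeight (q ++ [s]) = pathHeight q + s.2 := by simp [pathHeight]

lemma pathSize_append (q : List (ℤ × ℤ)) (s : ℤ × ℤ) :
    pathSize (q ++ [s]) = pathSize q + s.1 := by simp [pathSize]

lemma nonneg_append {q : List (ℤ × ℤ)} {s : ℤ × ℤ} :
    NonnegHeights (q ++ [s]) ↔ NonnegHeights q ∧ 0 ≤ pathHeight (q ++ [s]) := by
  constructor
  · intro h
    constructor
    · intro i
      rcases le_or_gt i q.length with hi | hi
      · have := h i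
        rwa [take_append_of_le_length hi] at this
      · have h2 := h q.length
        rw [take_append_of_le_length le_rfl] at h2
        rwa [take_of_length_le (le_of_lt hi), ← take_of_length_le (le_refl q.length)]
    · have := h (q.length + 1)
      rwa [take_of_length_le (by simp)] at this
  · rintro ⟨h1, h2⟩ i
    rcases le_or_gt i q.length with hi | hi
    · rw [take_append_of_le_length hi]; exact h1 i
    · rw [take_of_length_le (by simp; omega)]; exact h2

lemma zigzag_append {q : List (ℤ × ℤ)} {s : ℤ × ℤ} (hq : q ≠ []) :
    IsPartialZigzag (q ++ [s]) ↔
      IsPartialZigzag q ∧ s ∈ KnightSteps ∧ (q.getLast hq).2 * s.2 < 0 ∧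
        0 ≤ pathHeight q + s.2 := by
  rw [← pathHeight_append]
  constructor
  · rintro ⟨⟨hmem, hnn⟩, hz⟩
    rw [nonneg_append] at hnn
    rw [IsZigzag, show Chain' _ _ = List.IsChain _ _ from rfl, isChain_append] at hz
    refine ⟨⟨⟨fun t ht => hmem t (by simp [ht]), hnn.1⟩, hz.1⟩,
      hmem s (by simp), ?_, hnn.2⟩
    exact hz.2.2 _ (getLast?_eq_getLast hq) s rfl
  · rintro ⟨⟨⟨hmem, hnn⟩, hz⟩, hs, hlast, hh⟩
    refine ⟨⟨?_, nonneg_append.2 ⟨hnn, hh⟩⟩, ?_⟩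
    · intro t ht
      rcases mem_append.1 ht with h | h
      · exact hmem t h
      · simp at h; subst h; exact hs
    · rw [IsZigzag, show Chain' _ _ = List.IsChain _ _ from rfl, isChain_append]
      refine ⟨hz, isChain_singleton _, ?_⟩
      intro x hx y hy
      simp only [head?_cons, Option.mem_def, Option.some.injEq] at hy
      rw [getLast?_eq_getLast hq, Option.mem_def, Option.some.injEq] at hx
      subst hx; subst hy; exact hlast

lemma length_le_size {p : List (ℤ × ℤ)} (h : ∀ s ∈ p, s ∈ KnightSteps) :
    (p.length : ℤ) ≤ pathSize p := by
  induction p with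
  | nil => simp [pathSize]
  | cons a t ih =>
    have ha := knight_cases (h a (by simp))
    have ht := ih (fun s hs => h s (by simp [hs]))
    have : pathSize (a :: t) = a.1 + pathSize t := by simp [pathSize]
    rw [this]
    have ha1 : 1 ≤ a.1 := by rcases ha with h|h|h|h <;> subst h <;> norm_num
    simp only [length_cons]
    push_cast
    omega

lemma knight_finite : KnightSteps.Finite := by
  unfold KnightSteps
  exact ((((Set.finite_singleton _).insert _).insert _).insert _)

lemma finite_paths (m c : ℤ) (Q : List (ℤ × ℤ) → Prop) :
    Finite {p : List (ℤ × ℤ) //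
      IsPartialZigzag p ∧ pathSize p = m ∧ pathHeight p = c ∧ Q p} := by
  have : Finite ↥KnightSteps := knight_finite
  have hfin : {l : List (ℤ × ℤ) | (∀ s ∈ l, s ∈ KnightSteps) ∧ l.length ≤ m.toNat}.Finite := by
    have h := (List.finite_length_le ↥KnightSteps m.toNat).image (List.map Subtype.val)
    apply h.subset
    rintro l ⟨h1, h2⟩
    exact ⟨l.pmap (fun a h => ⟨a, h1 a h⟩) (fun _ h => h), by simpa using h2,
      by rw [List.map_pmap, List.pmap_eq_map]; simp⟩
  have : {p : List (ℤ × ℤ) |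
      IsPartialZigzag p ∧ pathSize p = m ∧ pathHeight p = c ∧ Q p}.Finite := by
    apply hfin.subset
    rintro p ⟨⟨⟨hs, _⟩, _⟩, hsz, _⟩
    refine ⟨hs, ?_⟩
    have := length_le_size hs
    omega
  exact this.to_subtype

lemma append_mem {q : List (ℤ × ℤ)} {s : ℤ × ℤ} (hs : s ∈ KnightSteps) (hs2 : 0 < s.2)
    (hq : IsPartialZigzag q) (hd : EndsWithDown q) (hh : 0 ≤ pathHeight q + s.2) :
    IsPartialZigzag (q ++ [s]) ∧ EndsWithUp (q ++ [s]) := by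
  obtain ⟨t, ht, ht2⟩ := hd
  have hne : q ≠ [] := by rintro rfl; simp at ht
  have hgl : q.getLast hne = t := by
    rw [getLast?_eq_getLast hne] at ht
    exact Option.some_inj.mp ht
  refine ⟨(zigzag_append hne).2 ⟨hq, hs, ?_, hh⟩, s, getLast?_concat, hs2⟩
  rw [hgl]; exact mul_neg_of_neg_of_pos ht2 hs2

lemma decompose {p : List (ℤ × ℤ)} (hp : IsPartialZigzag p) (hu : EndsWithUp p)
    (hh : 3 ≤ pathHeight p) :
    ∃ q s, p = q ++ [s] ∧ (s = Estep ∨ s = Nstep) ∧ IsPartialZigzag q ∧ EndsWithDown q := by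
  obtain ⟨s, hs, hs2⟩ := hu
  have hne : p ≠ [] := by rintro rfl; simp at hs
  have hgl : p.getLast hne = s := by
    rw [getLast?_eq_getLast hne] at hs
    exact Option.some_inj.mp hs
  have hdec : p = p.dropLast ++ [s] := by
    conv_lhs => rw [← dropLast_concat_getLast hne, hgl]
  have hsK : s ∈ KnightSteps := hp.1.1 s (by rw [hdec]; simp)
  have hs2' : s.2 ≤ 2 := by rcases knight_cases hsK with h|h|h|h <;> subst h <;> norm_num
  have hqne : p.dropLast ≠ [] := by
    intro h
    rw [hdec, h] at hh
    simp [pathHeight] at hh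
    omega
  have hz : IsPartialZigzag (p.dropLast ++ [s]) := hdec ▸ hp
  rw [zigzag_append hqne] at hz
  obtain ⟨hzq, -, hlast, -⟩ := hz
  have hld : (p.dropLast.getLast hqne).2 < 0 := by
    rcases mul_neg_iff.mp hlast with ⟨-, h⟩ | ⟨h, -⟩
    · omega
    · exact h
  refine ⟨p.dropLast, s, hdec, ?_, hzq,
    (p.dropLast.getLast hqne), getLast?_eq_getLast hqne, hld⟩
  rcases knight_cases hsK with h|h|h|h <;> subst h <;> simp [Estep, Nstep] at hs2 ⊢

lemma mem_of_down_E {q : List (ℤ × ℤ)} {n k : ℤ} (hk : 3 ≤ k)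
    (h : IsPartialZigzag q ∧ pathSize q = n - 2 ∧ pathHeight q = k - 1 ∧ EndsWithDown q) :
    IsPartialZigzag (q ++ [Estep]) ∧ pathSize (q ++ [Estep]) = n ∧
      pathHeight (q ++ [Estep]) = k ∧ EndsWithUp (q ++ [Estep]) := by
  obtain ⟨hz, hsz, hh, hd⟩ := h
  have hE : Estep ∈ KnightSteps := by simp [KnightSteps, Estep]
  have hm := append_mem hE (by norm_num [Estep]) hz hd
    (by rw [hh]; show (0:ℤ) ≤ k - 1 + 1; omega)
  exact ⟨hm.1, by rw [pathSize_append, hsz]; show n - 2 + 2 = n; ring,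
    by rw [pathHeight_append, hh]; show k - 1 + 1 = k; ring, hm.2⟩

lemma mem_of_down_N {q : List (ℤ × ℤ)} {n k : ℤ} (hk : 3 ≤ k)
    (h : IsPartialZigzag q ∧ pathSize q = n - 1 ∧ pathHeight q = k - 2 ∧ EndsWithDown q) :
    IsPartialZigzag (q ++ [Nstep]) ∧ pathSize (q ++ [Nstep]) = n ∧
      pathHeight (q ++ [Nstep]) = k ∧ EndsWithUp (q ++ [Nstep]) := by
  obtain ⟨hz, hsz, hh, hd⟩ := h
  have hN : Nstep ∈ KnightSteps := by simp [KnightSteps, Nstep]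
  have hm := append_mem hN (by norm_num [Nstep]) hz hd
    (by rw [hh]; show (0:ℤ) ≤ k - 2 + 2; omega)
  exact ⟨hm.1, by rw [pathSize_append, hsz]; show n - 1 + 1 = n; ring,
    by rw [pathHeight_append, hh]; show k - 2 + 2 = k; ring, hm.2⟩

/-- for k ≥ 3, the number of partial zigzag knight's paths of size n
ending at height k with an up last step equals the number of those of size n−2
ending at height k−1 with a down last step plus the number of those of size n−1
ending at height k−2 with a down last step. -/
theorem stmt10 (k : ℕ) (hk : 3 ≤ k) (n : ℕ) :
    Nat.card {p : List (ℤ × ℤ) //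
        IsPartialZigzag p ∧ pathSize p = n ∧ pathHeight p = k ∧ EndsWithUp p}
      = Nat.card {p : List (ℤ × ℤ) // IsPartialZigzag p ∧ pathSize p = (n : ℤ) - 2 ∧
            pathHeight p = (k : ℤ) - 1 ∧ EndsWithDown p}
        + Nat.card {p : List (ℤ × ℤ) // IsPartialZigzag p ∧ pathSize p = (n : ℤ) - 1 ∧
            pathHeight p = (k : ℤ) - 2 ∧ EndsWithDown p} := by
  have hk3 : (3 : ℤ) ≤ (k : ℤ) := by exact_mod_cast hk
  have hB : Finite {p : List (ℤ × ℤ) // IsPartialZigzag p ∧ pathSize p = (n : ℤ) - 2 ∧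
      pathHeight p = (k : ℤ) - 1 ∧ EndsWithDown p} := finite_paths _ _ _
  have hC : Finite {p : List (ℤ × ℤ) // IsPartialZigzag p ∧ pathSize p = (n : ℤ) - 1 ∧
      pathHeight p = (k : ℤ) - 2 ∧ EndsWithDown p} := finite_paths _ _ _
  let g : ({p : List (ℤ × ℤ) // IsPartialZigzag p ∧ pathSize p = (n : ℤ) - 2 ∧
        pathHeight p = (k : ℤ) - 1 ∧ EndsWithDown p} ⊕
      {p : List (ℤ × ℤ) // IsPartialZigzag p ∧ pathSize p = (n : ℤ) - 1 ∧
        pathHeight p = (k : ℤ) - 2 ∧ EndsWithDown p}) →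
      {p : List (ℤ × ℤ) //
        IsPartialZigzag p ∧ pathSize p = n ∧ pathHeight p = k ∧ EndsWithUp p} :=
    Sum.elim (fun q => ⟨q.1 ++ [Estep], mem_of_down_E hk3 q.2⟩)
      (fun q => ⟨q.1 ++ [Nstep], mem_of_down_N hk3 q.2⟩)
  have hg : Function.Bijective g := by
    constructor
    · rintro (q₁ | q₁) (q₂ | q₂) hq <;>
        simp only [g, Sum.elim_inl, Sum.elim_inr, Subtype.mk.injEq] at hq
      · exact congrArg Sum.inl (Subtype.ext (append_cancel_right hq))
      · exfalso
        have := congrArg List.getLast? hq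
        rw [getLast?_concat, getLast?_concat] at this
        simp [Estep, Nstep] at this
      · exfalso
        have := congrArg List.getLast? hq
        rw [getLast?_concat, getLast?_concat] at this
        simp [Estep, Nstep] at this
      · exact congrArg Sum.inr (Subtype.ext (append_cancel_right hq))
    · rintro ⟨p, hz, hsz, hh, hu⟩
      obtain ⟨q, s, hdec, hs, hzq, hdq⟩ := decompose hz hu (by rw [hh]; exact hk3)
      have hszq : pathSize p = pathSize q + s.1 := by rw [hdec, pathSize_append]
      have hhq : pathHeight p = pathHeight q + s.2 := by rw [hdec, pathHeight_append]
      rcases hs with rfl | rfl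
      · refine ⟨Sum.inl ⟨q, hzq, ?_, ?_, hdq⟩, ?_⟩
        · show pathSize q = (n : ℤ) - 2
          have : pathSize q + 2 = (n : ℤ) := by
            rw [← hsz, hszq]; norm_num [Estep]
          omega
        · show pathHeight q = (k : ℤ) - 1
          have : pathHeight q + 1 = (k : ℤ) := by
            rw [← hh, hhq]; norm_num [Estep]
          omega
        · exact Subtype.ext hdec.symm
      · refine ⟨Sum.inr ⟨q, hzq, ?_, ?_, hdq⟩, ?_⟩
        · show pathSize q = (n : ℤ) - 1
          have : pathSize q + 1 = (n : ℤ) := by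
            rw [← hsz, hszq]; norm_num [Nstep]
          omega
        · show pathHeight q = (k : ℤ) - 2
          have : pathHeight q + 2 = (k : ℤ) := by
            rw [← hh, hhq]; norm_num [Nstep]
          omega
        · exact Subtype.ext hdec.symm
  rw [← Nat.card_eq_of_bijective g hg, Nat.card_sum]
end

section
/- Let r be the unique formal power series over ℚ with r(0)=0 satisfying r = z²·(1+r)². Then for all n ≥ 1 and k ≥ 1, the coefficient of z^{2n} in r^k equals (k/n)·binom(2n, n−k), and all coefficients of odd powers of z in r^k vanish. -/
/-- `ichoose m j` is `choose m j` for `j ≥ 0` and `0` for negative `j`. -/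
def ichoose (m : ℕ) (j : ℤ) : ℕ := if 0 ≤ j then m.choose j.toNat else 0

lemma factq (a : ℕ) : ((a+1).factorial : ℚ) = (a+1) * a.factorial := by
  rw [Nat.factorial_succ]; push_cast; ring

lemma ichoose_neg (m : ℕ) {j : ℤ} (h : j < 0) : ichoose m j = 0 := if_neg (by omega)

lemma ichoose_coe (m j : ℕ) : ichoose m (j : ℤ) = m.choose j := by
  simp [ichoose]

/-- auxiliary coefficient function -/
def Aux (k m : ℕ) : ℚ :=
  if k = 0 then (if m = 0 then 1 else 0)
  else if 2 ∣ m then (k : ℚ) / ((m / 2 : ℕ) : ℚ) * (ichoose m (((m / 2 : ℕ) : ℤ) - (k : ℤ)) : ℚ)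
  else 0

lemma aux_odd (k m : ℕ) (h : ¬ 2 ∣ m) : Aux k m = 0 := by
  have hm : m ≠ 0 := by rintro rfl; exact h ⟨0, rfl⟩
  unfold Aux
  rcases Nat.eq_zero_or_pos k with rfl | hk
  · simp [hm]
  · rw [if_neg (by omega), if_neg h]

lemma aux_val (k t : ℕ) (ht : 1 ≤ t) :
    Aux k (2*t) = (k:ℚ)/t * (ichoose (2*t) ((t:ℤ) - k) : ℚ) := by
  rcases Nat.eq_zero_or_pos k with rfl | hk
  · have ht' : t ≠ 0 := by omega
    simp [Aux, ht']
  · unfold Aux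
    rw [if_neg (by omega), if_pos ⟨t, rfl⟩, Nat.mul_div_cancel_left t (by norm_num)]

set_option maxHeartbeats 1000000 in
lemma main_id (k j : ℕ) :
    ((k:ℚ)+1)/(k+j+3) * ((2*k+2*j+6).choose (j+2) : ℚ)
      = (k:ℚ)/(k+j+2) * ((2*k+2*j+4).choose (j+2) : ℚ)
        + 2*((k:ℚ)+1)/(k+j+2) * ((2*k+2*j+4).choose (j+1) : ℚ)
        + ((k:ℚ)+2)/(k+j+2) * ((2*k+2*j+4).choose j : ℚ) := by
  have e1 : ((2*k+2*j+6).choose (j+2) : ℚ)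
      = ((2*k+2*j+6).factorial : ℚ) / (((j+2).factorial : ℚ) * ((2*k+j+4).factorial : ℚ)) := by
    rw [Nat.cast_choose ℚ (by omega : j+2 ≤ 2*k+2*j+6), show 2*k+2*j+6 - (j+2) = 2*k+j+4 by omega]
  have e2 : ((2*k+2*j+4).choose (j+2) : ℚ)
      = ((2*k+2*j+4).factorial : ℚ) / (((j+2).factorial : ℚ) * ((2*k+j+2).factorial : ℚ)) := by
    rw [Nat.cast_choose ℚ (by omega : j+2 ≤ 2*k+2*j+4), show 2*k+2*j+4 - (j+2) = 2*k+j+2 by omega]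
  have e3 : ((2*k+2*j+4).choose (j+1) : ℚ)
      = ((2*k+2*j+4).factorial : ℚ) / (((j+1).factorial : ℚ) * ((2*k+j+3).factorial : ℚ)) := by
    rw [Nat.cast_choose ℚ (by omega : j+1 ≤ 2*k+2*j+4), show 2*k+2*j+4 - (j+1) = 2*k+j+3 by omega]
  have e4 : ((2*k+2*j+4).choose j : ℚ)
      = ((2*k+2*j+4).factorial : ℚ) / ((j.factorial : ℚ) * ((2*k+j+4).factorial : ℚ)) := by
    rw [Nat.cast_choose ℚ (by omega : j ≤ 2*k+2*j+4), show 2*k+2*j+4 - j = 2*k+j+4 by omega]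
  rw [e1, e2, e3, e4]
  set F6 := ((2*k+2*j+6).factorial : ℚ) with hF6
  set A := ((2*k+2*j+4).factorial : ℚ) with hA
  set B2 := ((j+2).factorial : ℚ) with hB2
  set B1 := ((j+1).factorial : ℚ) with hB1
  set P := ((j).factorial : ℚ) with hP
  set F4 := ((2*k+j+4).factorial : ℚ) with hF4
  set F3 := ((2*k+j+3).factorial : ℚ) with hF3
  set Q := ((2*k+j+2).factorial : ℚ) with hQ
  have rF6 : F6 = (2*(k:ℚ)+2*j+6)*(2*(k:ℚ)+2*j+5)*A := by
    rw [hF6, hA, show 2*k+2*j+6 = (2*k+2*j+4)+1+1 by omega, factq, factq]; push_cast; ring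
  have rB2 : B2 = ((j:ℚ)+2)*B1 := by
    rw [hB2, hB1, show j+2 = (j+1)+1 by omega, factq]; push_cast; ring
  have rB1 : B1 = ((j:ℚ)+1)*P := by rw [hB1, hP, factq]
  have rF4 : F4 = (2*(k:ℚ)+j+4)*(2*(k:ℚ)+j+3)*Q := by
    rw [hF4, hQ, show 2*k+j+4 = (2*k+j+2)+1+1 by omega, factq, factq]; push_cast; ring
  have rF3 : F3 = (2*(k:ℚ)+j+3)*Q := by
    rw [hF3, hQ, show 2*k+j+3 = (2*k+j+2)+1 by omega, factq]; push_cast; ring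
  rw [rF6, rB2, rB1, rF4, rF3]
  have n1 : A ≠ 0 := by rw [hA]; positivity
  have n2 : P ≠ 0 := by rw [hP]; positivity
  have n3 : Q ≠ 0 := by rw [hQ]; positivity
  have n4 : ((k:ℚ)+j+3) ≠ 0 := by positivity
  have n5 : ((k:ℚ)+j+2) ≠ 0 := by positivity
  have n6 : ((j:ℚ)+2) ≠ 0 := by positivity
  have n7 : ((j:ℚ)+1) ≠ 0 := by positivity
  have n8 : (2*(k:ℚ)+j+4) ≠ 0 := by positivity
  have n9 : (2*(k:ℚ)+j+3) ≠ 0 := by positivity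
  field_simp
  ring

lemma ichoose_cast_sub (m a b : ℕ) :
    (ichoose m ((a:ℤ) - b) : ℚ) = if b ≤ a then (m.choose (a - b) : ℚ) else 0 := by
  unfold ichoose
  by_cases h : b ≤ a
  · rw [if_pos (by omega), if_pos h]
    have : ((a:ℤ) - b).toNat = a - b := by omega
    rw [this]
  · rw [if_neg (by omega), if_neg h]
    simp

lemma aux_rec (k t : ℕ) :
    Aux (k+1) (2*t+2) = Aux k (2*t) + 2 * Aux (k+1) (2*t) + Aux (k+2) (2*t) := by
  rcases Nat.eq_zero_or_pos t with rfl | ht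
  · -- t = 0
    have hz : ∀ j : ℕ, Aux (j+1) 0 = 0 := by
      intro j
      unfold Aux
      rw [if_neg (by omega), if_pos ⟨0, rfl⟩]
      rw [ichoose_neg _ (by push_cast; omega)]
      simp
    rcases Nat.eq_zero_or_pos k with rfl | hk
    · rw [hz, hz]
      show Aux 1 2 = Aux 0 0 + 2*0 + 0
      unfold Aux
      norm_num [ichoose]
    · obtain ⟨k', rfl⟩ : ∃ k', k = k'+1 := ⟨k-1, by omega⟩
      rw [hz, hz, hz]
      unfold Aux
      rw [if_neg (by omega), if_pos ⟨1, rfl⟩]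
      rw [ichoose_neg _ (by push_cast; omega)]
      norm_num
  · -- t ≥ 1
    rw [show 2*t+2 = 2*(t+1) by ring,
        aux_val (k+1) (t+1) (by omega), aux_val k t ht,
        aux_val (k+1) t ht, aux_val (k+2) t ht]
    rw [ichoose_cast_sub, ichoose_cast_sub, ichoose_cast_sub, ichoose_cast_sub]
    have htQ : (t:ℚ) ≠ 0 := Nat.cast_ne_zero.mpr (by omega)
    by_cases h1 : t < k
    · rw [if_neg (by omega), if_neg (by omega), if_neg (by omega), if_neg (by omega)]
      ring
    · by_cases h2 : k = t
      · subst h2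
        rw [if_pos (by omega), if_pos (by omega), if_neg (by omega), if_neg (by omega),
            show k+1-(k+1) = 0 by omega, show k-k = 0 by omega,
            Nat.choose_zero_right, Nat.choose_zero_right]
        push_cast
        field_simp
        ring
      · by_cases h3 : t = k+1
        · subst h3
          rw [if_pos (by omega), if_pos (by omega), if_pos (by omega), if_neg (by omega),
              show k+1+1-(k+1) = 1 by omega, show k+1-k = 1 by omega,
              show k+1-(k+1) = 0 by omega,
              Nat.choose_one_right, Nat.choose_one_right, Nat.choose_zero_right]
          push_cast
          field_simp
          ring
        · obtain ⟨j, rfl⟩ : ∃ j, t = k+2+j := ⟨t-k-2, by omega⟩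
          rw [if_pos (by omega), if_pos (by omega), if_pos (by omega), if_pos (by omega),
              show k+2+j+1-(k+1) = j+2 by omega, show k+2+j-k = j+2 by omega,
              show k+2+j-(k+1) = j+1 by omega, show k+2+j-(k+2) = j by omega,
              show 2*(k+2+j+1) = 2*k+2*j+6 by omega, show 2*(k+2+j) = 2*k+2*j+4 by omega]
          push_cast
          linear_combination main_id k j

/-- if r is the formal power series over ℚ with r(0)=0 and
r = z²(1+r)², then [z^{2n}] r^k = (k/n)·binom(2n, n−k) for n, k ≥ 1, and all
odd coefficients of r^k vanish. -/
theorem stmt12 (r : PowerSeries ℚ)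
    (h0 : PowerSeries.constantCoeff r = 0)
    (hr : r = PowerSeries.X ^ 2 * (1 + r) ^ 2)
    (n k : ℕ) (hn : 1 ≤ n) (hk : 1 ≤ k) :
    PowerSeries.coeff (2 * n) (r ^ k)
        = ((k : ℚ) / n) * (ichoose (2 * n) ((n : ℤ) - k) : ℚ) ∧
    ∀ m : ℕ, Odd m → PowerSeries.coeff m (r ^ k) = 0 := by
  have hkey : ∀ j : ℕ,
      r^(j+1) = PowerSeries.X^2 * (r^j + (r*r^j + r*r^j) + r^2*r^j) := by
    intro j
    have h1 : r^(j+1) = (PowerSeries.X^2*(1+r)^2) * r^j := by rw [← hr]; ring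
    rw [h1]; ring
  have step : ∀ j m : ℕ, PowerSeries.coeff (m+2) (r^(j+1))
      = PowerSeries.coeff m (r^j) + 2 * PowerSeries.coeff m (r^(j+1))
        + PowerSeries.coeff m (r^(j+2)) := by
    intro j m
    conv_lhs => rw [hkey j, PowerSeries.coeff_X_pow_mul]
    rw [show r^(j+1) = r*r^j by ring, show r^(j+2) = r^2*r^j by ring]
    simp only [map_add]
    ring
  have base0 : ∀ j : ℕ, PowerSeries.coeff 0 (r^(j+1)) = 0 := by
    intro j
    rw [PowerSeries.coeff_zero_eq_constantCoeff, map_pow, h0, zero_pow (Nat.succ_ne_zero j)]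
  have base1 : ∀ j : ℕ, PowerSeries.coeff 1 (r^(j+1)) = 0 := by
    intro j
    rw [hkey j, PowerSeries.coeff_X_pow_mul']
    norm_num
  have main : ∀ m j : ℕ, PowerSeries.coeff m (r^j) = Aux j m := by
    intro m
    induction m using Nat.strong_induction_on with
    | _ m ih =>
      intro j
      rcases j with _ | j
      · simp [Aux, PowerSeries.coeff_one]
      · rcases m with _ | _ | m
        · rw [base0 j]
          unfold Aux
          rw [if_neg (by omega), if_pos ⟨0, rfl⟩, ichoose_neg _ (by push_cast; omega)]
          simp
        · rw [base1 j, aux_odd _ _ (by omega)]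
        · rw [step j m, ih m (by omega) j, ih m (by omega) (j+1), ih m (by omega) (j+2)]
          rcases Nat.even_or_odd m with ⟨t, rfl⟩ | hodd
          · rw [show t+t+2 = 2*t+2 by ring, show t+t = 2*t by ring]
            exact (aux_rec j t).symm
          · obtain ⟨t, rfl⟩ := hodd
            rw [aux_odd _ _ (by omega), aux_odd _ _ (by omega),
                aux_odd _ _ (by omega), aux_odd _ _ (by omega)]
            ring
  constructor
  · rw [main (2*n) k, aux_val k n hn]
  · intro m hm
    obtain ⟨t, rfl⟩ := hm
    rw [main _ k, aux_odd _ _ (by omega)]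
end

section
/- For every n ≥ 1, the number of non-empty zigzag knight's paths of length 2n ending on the x-axis that begin with the step E=(2,1) equals the number of zigzag knight's paths of length 2n−2 ending on the x-axis; equivalently, every such path beginning with E has the form E Ē β for a unique zigzag knight's path β ending on the x-axis. -/
open List

lemma nn_cons2 (l : List (ℤ×ℤ)) :
    NonnegHeights (Estep :: Ebar :: l) ↔ NonnegHeights l := by
  constructor
  · intro h i
    have := h (i+2)
    simpa [Estep, Ebar] using this
  · intro h i
    match i with
    | 0 => simp
    | 1 => simp [Estep]
    | Nat.succ (Nat.succ j) =>
      have := h j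
      simpa [Estep, Ebar] using this

lemma decomp (p : List (ℤ×ℤ)) (hp : IsZigzagKnightPath p)
    (hh : p.head? = some Estep) :
    ∃ β, p = Estep :: Ebar :: β ∧ IsZigzagKnightPath β := by
  obtain ⟨⟨⟨hmem, hnn⟩, hzz⟩, hht⟩ := hp
  cases p with
  | nil => simp at hh
  | cons a q =>
    have ha : a = Estep := by simpa using hh
    subst ha
    cases q with
    | nil => simp [pathHeight, Estep] at hht
    | cons s t =>
      have hs2 : s.2 < 0 := by
        have h1 : Estep.2 * s.2 < 0 := (List.isChain_cons_cons.mp hzz).1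
        simp [Estep] at h1
        nlinarith [h1]
      have hsn : 0 ≤ 1 + s.2 := by
        have := hnn 2
        simpa [Estep] using this
      have hsK := hmem s (by simp)
      have hs : s = Ebar := by
        simp only [KnightSteps, Set.mem_insert_iff, Set.mem_singleton_iff] at hsK
        rcases hsK with h|h|h|h <;> subst h <;> simp [Ebar] at hs2 hsn ⊢ <;> omega
      subst hs
      refine ⟨t, rfl, ⟨⟨⟨fun x hx => hmem x (by simp [hx]), (nn_cons2 t).mp hnn⟩,
        hzz.tail.tail⟩, ?_⟩⟩
      simp [pathHeight, Estep, Ebar] at hht ⊢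
      linarith

lemma build (β : List (ℤ×ℤ)) (hβ : IsZigzagKnightPath β) :
    IsZigzagKnightPath (Estep :: Ebar :: β) := by
  obtain ⟨⟨⟨hmem, hnn⟩, hzz⟩, hht⟩ := hβ
  refine ⟨⟨⟨?_, (nn_cons2 β).mpr hnn⟩, ?_⟩, ?_⟩
  · intro x hx
    simp at hx
    rcases hx with h|h|h
    · subst h; simp [KnightSteps, Estep]
    · subst h; simp [KnightSteps, Ebar]
    · exact hmem x h
  · refine List.isChain_cons_cons.mpr ⟨by norm_num [Estep, Ebar], List.isChain_cons.mpr ⟨?_, hzz⟩⟩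
    intro b hb
    cases β with
    | nil => simp at hb
    | cons c t =>
      have hc : c = b := by simpa using hb
      subst hc
      have h1 : 0 ≤ c.2 := by simpa using hnn 1
      have hK := hmem c (by simp)
      simp only [KnightSteps, Set.mem_insert_iff, Set.mem_singleton_iff] at hK
      simp only [Ebar]
      rcases hK with h|h|h|h <;> subst h <;> norm_num at h1 <;> norm_num
  · simp [pathHeight, Estep, Ebar] at hht ⊢; linarith


/-- for n ≥ 1, zigzag knight's paths of length 2n ending on the
x-axis and beginning with E are equinumerous with zigzag knight's paths of
length 2n−2 ending on the x-axis; each such path is E Ē β for a unique zigzag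
knight's path β ending on the x-axis. -/
theorem stmt16 (n : ℕ) (hn : 1 ≤ n) :
    Nat.card {p : List (ℤ × ℤ) //
        IsZigzagKnightPath p ∧ p.length = 2 * n ∧ p.head? = some Estep}
      = Nat.card {p : List (ℤ × ℤ) // IsZigzagKnightPath p ∧ p.length = 2 * n - 2} ∧
    ∀ p : List (ℤ × ℤ), IsZigzagKnightPath p → p.length = 2 * n →
      p.head? = some Estep →
        ∃! β, IsZigzagKnightPath β ∧ p = Estep :: Ebar :: β := by
  constructor
  · refine Nat.card_congr ⟨fun q => ⟨q.1.drop 2, ?_⟩, fun q => ⟨Estep :: Ebar :: q.1,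
      build _ q.2.1, by have := q.2.2; simp; omega, rfl⟩, ?_, ?_⟩
    · obtain ⟨β, hEq, hβ⟩ := decomp q.1 q.2.1 q.2.2.2
      have hl := q.2.2.1
      rw [hEq] at hl ⊢
      simp at hl ⊢
      exact ⟨hβ, by omega⟩
    · rintro ⟨p, hp⟩
      obtain ⟨β, hEq, hβ⟩ := decomp p hp.1 hp.2.2
      apply Subtype.ext
      simp [hEq]
    · rintro ⟨β, hβ⟩
      rfl
  · intro p hp hlen hh
    obtain ⟨β, hEq, hβ⟩ := decomp p hp hh
    exact ⟨β, ⟨hβ, hEq⟩, fun y hy => by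
      rw [hEq] at hy
      exact (List.cons_injective.eq_iff.mp (List.cons_injective.eq_iff.mp hy.2)).symm⟩
end

section
/- The map φ from zigzag knight's paths ending on the x-axis to Dyck paths, defined by φ(ε)=UD, φ(E Ē β)=U φ(β) D, φ(N N̄ β)=U D φ(β), φ(N Ē β E N̄ γ)=U φ(β) D φ(γ), is injective. -/
open List

/-- A Dyck path, encoded as a list of steps `1 = U` and `-1 = D` with nonnegative
partial sums, ending at height 0. -/
def IsDyck (d : List ℤ) : Prop :=
  (∀ x ∈ d, x = 1 ∨ x = -1) ∧ (∀ i, 0 ≤ (d.take i).sum) ∧ d.sum = 0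

/-! ### Auxiliary material -/

/-- Height after the first `i` steps. -/
def hsum (L : List (ℤ × ℤ)) (i : ℕ) : ℤ := ((L.take i).map Prod.snd).sum

lemma hsum_zero (L : List (ℤ × ℤ)) : hsum L 0 = 0 := rfl

lemma hsum_succ (L : List (ℤ × ℤ)) (i : ℕ) (h : i < L.length) :
    hsum L (i+1) = hsum L i + (L[i]'h).2 := by
  unfold hsum
  rw [List.take_succ, List.getElem?_eq_getElem h]
  rw [List.map_append, List.sum_append]
  simp

lemma hsum_all (L : List (ℤ × ℤ)) : hsum L L.length = (L.map Prod.snd).sum := by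
  unfold hsum; rw [List.take_length]

lemma hsum_take (L : List (ℤ × ℤ)) (m i : ℕ) : hsum (L.take m) i = hsum L (min i m) := by
  unfold hsum; rw [List.take_take]

lemma hsum_add (L : List (ℤ × ℤ)) (m i : ℕ) :
    hsum L (m + i) = hsum L m + hsum (L.drop m) i := by
  unfold hsum
  rw [List.take_add, List.map_append, List.sum_append]

lemma zk_tail2 {a b : ℤ × ℤ} {L : List (ℤ × ℤ)} (h : IsZigzagKnightPath (a :: b :: L))
    (hab : a.2 + b.2 = 0) : IsZigzagKnightPath L := by
  obtain ⟨⟨⟨hmem, hnn⟩, hch⟩, hh⟩ := h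
  refine ⟨⟨⟨fun s hs => hmem s (by simp [hs]), fun i => ?_⟩, hch.tail.tail⟩, ?_⟩
  · have h2 := hnn (i + 2)
    rw [show (a :: b :: L).take (i+2) = a :: b :: L.take i from rfl] at h2
    simp only [List.map_cons, List.sum_cons] at h2
    linarith
  · simp only [pathHeight, List.map_cons, List.sum_cons] at hh ⊢
    linarith

/-- The decomposition lemma: every zigzag knight's path ending on the x-axis is empty
or has exactly one of the three forms. -/
theorem zk_decomp (p : List (ℤ × ℤ)) (hp : IsZigzagKnightPath p) :
    p = [] ∨
    (∃ β, IsZigzagKnightPath β ∧ p = Estep :: Ebar :: β) ∨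
    (∃ β, IsZigzagKnightPath β ∧ p = Nstep :: Nbar :: β) ∨
    (∃ β γ, IsZigzagKnightPath β ∧ IsZigzagKnightPath γ ∧
      p = Nstep :: Ebar :: (β ++ Estep :: Nbar :: γ)) := by
  obtain ⟨⟨⟨hmem, hnn⟩, hch⟩, hh⟩ := id hp
  rcases p with _ | ⟨a, rest⟩
  · exact Or.inl rfl
  rcases rest with _ | ⟨b, L⟩
  · -- single step: impossible
    exfalso
    have ha := hmem a (by simp)
    simp only [KnightSteps, Set.mem_insert_iff, Set.mem_singleton_iff] at ha
    simp only [pathHeight, List.map_cons, List.map_nil, List.sum_cons, List.sum_nil] at hh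
    rcases ha with rfl | rfl | rfl | rfl <;> norm_num at hh
  have ha := hmem a (by simp)
  have hb := hmem b (by simp)
  simp only [KnightSteps, Set.mem_insert_iff, Set.mem_singleton_iff] at ha hb
  have ha0 : 0 ≤ a.2 := by
    have h := hnn 1
    rw [show (a :: b :: L).take 1 = [a] from rfl] at h
    simpa using h
  have hb0 : 0 ≤ a.2 + b.2 := by
    have h := hnn 2
    rw [show (a :: b :: L).take 2 = [a, b] from rfl] at h
    simp only [List.map_cons, List.map_nil, List.sum_cons, List.sum_nil] at h
    linarith
  have hab : a.2 * b.2 < 0 := (List.isChain_cons_cons.mp hch).1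
  rcases ha with rfl | rfl | rfl | rfl <;> rcases hb with rfl | rfl | rfl | rfl <;>
    norm_num at ha0 <;> norm_num at hab <;> norm_num at hb0
  · -- E Ē β
    exact Or.inr (Or.inl ⟨L, zk_tail2 hp (by norm_num), rfl⟩)
  · -- N Ē ... the hard case
    refine Or.inr (Or.inr (Or.inr ?_))
    have hLmem : ∀ s ∈ L, s ∈ KnightSteps := fun s hs => hmem s (by simp [hs])
    have hS : ∀ i, (-1 : ℤ) ≤ hsum L i := by
      intro i
      have h2 := hnn (i + 2)
      rw [show (((1:ℤ),(2:ℤ)) :: ((2:ℤ),(-1:ℤ)) :: L).take (i+2)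
            = ((1:ℤ),(2:ℤ)) :: ((2:ℤ),(-1:ℤ)) :: L.take i from rfl] at h2
      simp only [List.map_cons, List.sum_cons] at h2
      unfold hsum
      linarith
    have hsumL : (L.map Prod.snd).sum = -1 := by
      simp only [pathHeight, List.map_cons, List.sum_cons] at hh
      linarith
    have hx0 : ∀ (h : 0 < L.length), 0 < (L[0]'h).2 := by
      intro h
      rcases L with _ | ⟨x, xs⟩
      · simp at h
      · have hcb : ((2:ℤ),(-1:ℤ)).2 * x.2 < 0 := (List.isChain_cons_cons.mp hch.tail).1
        simp only [List.getElem_cons_zero]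
        simp only at hcb
        omega
    have hex : ∃ j, hsum L j = -1 := ⟨L.length, by rw [hsum_all]; exact hsumL⟩
    have hk := Nat.find_spec hex
    have hkn : Nat.find hex ≤ L.length := Nat.find_min' hex (by rw [hsum_all]; exact hsumL)
    have hk0 : Nat.find hex ≠ 0 := by
      intro h
      rw [h, hsum_zero] at hk
      norm_num at hk
    have hk1 : Nat.find hex ≠ 1 := by
      intro h
      have h0n : 0 < L.length := by omega
      have e := hsum_succ L 0 h0n
      have hx := hx0 h0n
      rw [h] at hk
      rw [hsum_zero] at e
      norm_num at e
      omega
    have hk2 : 2 ≤ Nat.find hex := by omega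
    obtain ⟨m, hmeq⟩ : ∃ m, Nat.find hex = m + 2 := ⟨Nat.find hex - 2, by omega⟩
    rw [hmeq] at hk hkn
    have hmlt : ∀ i < m + 2, 0 ≤ hsum L i := by
      intro i hi
      have h5 := Nat.find_min hex (show i < Nat.find hex by omega)
      have h6 := hS i
      omega
    have h1n : m < L.length := by omega
    have h2n : m + 1 < L.length := by omega
    have e1 := hsum_succ L m h1n
    have e2 : hsum L (m+2) = hsum L (m+1) + (L[m+1]'h2n).2 := hsum_succ L (m+1) h2n
    have hm0 : 0 ≤ hsum L m := hmlt m (by omega)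
    have hm1 : 0 ≤ hsum L (m+1) := hmlt (m+1) (by omega)
    have hcross : (L[m]'h1n).2 * (L[m+1]'h2n).2 < 0 := by
      have hcL : List.Chain' (fun a b => a.2 * b.2 < 0) L := hch.tail.tail
      have := List.isChain_iff_getElem.mp hcL m (by omega)
      simpa [List.get_eq_getElem] using this
    have hma := hLmem _ (List.getElem_mem h1n)
    have hmb := hLmem _ (List.getElem_mem h2n)
    simp only [KnightSteps, Set.mem_insert_iff, Set.mem_singleton_iff] at hma hmb
    have hAB : L[m]'h1n = ((2:ℤ),(1:ℤ)) ∧ L[m+1]'h2n = ((1:ℤ),(-2:ℤ)) ∧ hsum L m = 0 := by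
      rcases hma with h | h | h | h <;> rcases hmb with h' | h' | h' | h' <;>
        rw [h] at e1 hcross <;> rw [h'] at e2 hcross <;>
        norm_num at e1 <;> norm_num at e2 <;> norm_num at hcross <;>
        first
          | exact ⟨h, h', by omega⟩
          | (exfalso; omega)
    obtain ⟨hA, hB, hm00⟩ := hAB
    have hLsplit : L = L.take m ++ ((2:ℤ),(1:ℤ)) :: ((1:ℤ),(-2:ℤ)) :: L.drop (m+2) := by
      conv_lhs => rw [← List.take_append_drop m L]
      congr 1
      rw [List.drop_eq_getElem_cons h1n, List.drop_eq_getElem_cons h2n, hA, hB]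
    refine ⟨L.take m, L.drop (m+2), ?_, ?_, ?_⟩
    · refine ⟨⟨⟨fun s hs => hLmem s (List.mem_of_mem_take hs), fun i => ?_⟩,
        (hch.tail.tail).take m⟩, ?_⟩
      · show (0:ℤ) ≤ hsum (L.take m) i
        rw [hsum_take]
        exact hmlt _ (by have := min_le_right i m; omega)
      · show pathHeight (L.take m) = 0
        exact hm00
    · refine ⟨⟨⟨fun s hs => hLmem s (List.mem_of_mem_drop hs), fun i => ?_⟩,
        (hch.tail.tail).drop (m+2)⟩, ?_⟩
      · show (0:ℤ) ≤ hsum (L.drop (m+2)) i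
        have e := hsum_add L (m+2) i
        have h6 := hS (m+2+i)
        omega
      · show pathHeight (L.drop (m+2)) = 0
        have e := hsum_add L (m+2) (L.length - (m+2))
        rw [show m + 2 + (L.length - (m+2)) = L.length from by omega, hsum_all] at e
        have e2 : hsum (L.drop (m+2)) (L.length - (m+2)) = pathHeight (L.drop (m+2)) := by
          rw [show L.length - (m+2) = (L.drop (m+2)).length from (List.length_drop (i := m.succ.succ) (l := L)).symm,
            hsum_all]
          rfl
        rw [e2] at e
        omega
    · show ((1:ℤ),(2:ℤ)) :: ((2:ℤ),(-1:ℤ)) :: L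
          = Nstep :: Ebar :: (L.take m ++ Estep :: Nbar :: L.drop (m+2))
      conv_lhs => rw [hLsplit]
      simp [Nstep, Ebar, Estep, Nbar]
  · -- N N̄ β
    exact Or.inr (Or.inr (Or.inl ⟨L, zk_tail2 hp (by norm_num), rfl⟩))

lemma dyck_nil : IsDyck [] := ⟨by simp, by simp, by simp⟩

lemma dyck_comp {d e : List ℤ} (hd : IsDyck d) (he : IsDyck e) :
    IsDyck (1 :: (d ++ -1 :: e)) := by
  obtain ⟨hd1, hd2, hd3⟩ := hd
  obtain ⟨he1, he2, he3⟩ := he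
  refine ⟨?_, ?_, ?_⟩
  · intro x hx
    simp only [List.mem_cons, List.mem_append] at hx
    rcases hx with rfl | hx | rfl | hx
    · exact Or.inl rfl
    · exact hd1 x hx
    · exact Or.inr rfl
    · exact he1 x hx
  · intro i
    cases i with
    | zero => simp
    | succ j =>
      rw [List.take_succ_cons, List.sum_cons, List.take_append, List.sum_append]
      have h1 : 0 ≤ (d.take j).sum := hd2 j
      have h2 : (-1:ℤ) ≤ (((-1) :: e).take (j - d.length)).sum := by
        cases hjd : j - d.length with
        | zero => simp
        | succ t =>
          rw [List.take_succ_cons, List.sum_cons]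
          have := he2 t
          linarith
      linarith
  · simp [hd3, he3]

lemma dyck_key {d d' e e' : List ℤ} (hd : IsDyck d) (hd' : IsDyck d')
    (h : d ++ -1 :: e = d' ++ -1 :: e') : d = d' ∧ e = e' := by
  have aux : ∀ {x x' y y' : List ℤ}, IsDyck x → IsDyck x' →
      x ++ -1 :: y = x' ++ -1 :: y' → x.length < x'.length → False := by
    intro x x' y y' hx hx' heq hlt
    have e1 : (x ++ (-1:ℤ) :: y).take (x.length + 1) = x ++ [-1] := by
      rw [List.take_append, show x.length + 1 - x.length = 1 from by omega]
      rw [List.take_of_length_le (by omega)]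
      rfl
    have e2 : (x' ++ (-1:ℤ) :: y').take (x.length + 1) = x'.take (x.length + 1) := by
      rw [List.take_append, show x.length + 1 - x'.length = 0 from by omega]
      simp
    have e3 := congrArg (fun l => (List.take (x.length + 1) l).sum) heq
    rw [e1, e2] at e3
    have h4 : (x ++ [(-1:ℤ)]).sum = -1 := by
      rw [List.sum_append, hx.2.2]
      simp
    have h5 : 0 ≤ (x'.take (x.length + 1)).sum := hx'.2.1 _
    omega
  have hlen : d.length = d'.length := by
    rcases lt_trichotomy d.length d'.length with hl | hl | hl
    · exact (aux hd hd' h hl).elim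
    · exact hl
    · exact (aux hd' hd h.symm hl).elim
  obtain ⟨hD, hT⟩ := List.append_inj h hlen
  refine ⟨hD, ?_⟩
  injection hT

/-- the map φ with φ(ε)=UD, φ(E Ē β)=U φ(β) D, φ(N N̄ β)=U D φ(β),
φ(N Ē β E N̄ γ)=U φ(β) D φ(γ), from zigzag knight's paths ending on the x-axis to
Dyck paths, is injective. -/
theorem stmt17 (φ : List (ℤ × ℤ) → List ℤ)
    (h0 : φ [] = [1, -1])
    (h1 : ∀ β, IsZigzagKnightPath β →
        φ (Estep :: Ebar :: β) = 1 :: (φ β ++ [-1]))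
    (h2 : ∀ β, IsZigzagKnightPath β →
        φ (Nstep :: Nbar :: β) = 1 :: -1 :: φ β)
    (h3 : ∀ β γ, IsZigzagKnightPath β → IsZigzagKnightPath γ →
        φ (Nstep :: Ebar :: (β ++ Estep :: Nbar :: γ)) = 1 :: (φ β ++ -1 :: φ γ)) :
    (∀ p, IsZigzagKnightPath p → IsDyck (φ p)) ∧
    Set.InjOn φ {p | IsZigzagKnightPath p} := by
  have main1 : ∀ n (p : List (ℤ × ℤ)), p.length ≤ n → IsZigzagKnightPath p →
      IsDyck (φ p) ∧ φ p ≠ [] := by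
    intro n
    induction n with
    | zero =>
      intro p hl hp
      have hp0 : p = [] := by
        cases p with
        | nil => rfl
        | cons a t => simp at hl
      subst hp0
      rw [h0]
      refine ⟨by simpa using dyck_comp dyck_nil dyck_nil, by simp⟩
    | succ n ih =>
      intro p hl hp
      rcases zk_decomp p hp with rfl | ⟨β, hβ, rfl⟩ | ⟨β, hβ, rfl⟩ | ⟨β, γ, hβ, hγ, rfl⟩
      · rw [h0]
        refine ⟨by simpa using dyck_comp dyck_nil dyck_nil, by simp⟩
      · have hlβ : β.length ≤ n := by simp at hl; omega
        rw [h1 β hβ]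
        exact ⟨dyck_comp (ih β hlβ hβ).1 dyck_nil, by simp⟩
      · have hlβ : β.length ≤ n := by simp at hl; omega
        rw [h2 β hβ]
        exact ⟨by simpa using dyck_comp dyck_nil (ih β hlβ hβ).1, by simp⟩
      · have hlβ : β.length ≤ n ∧ γ.length ≤ n := by
          simp [List.length_append] at hl
          omega
        rw [h3 β γ hβ hγ]
        exact ⟨dyck_comp (ih β hlβ.1 hβ).1 (ih γ hlβ.2 hγ).1, by simp⟩
  have mD : ∀ p, IsZigzagKnightPath p → IsDyck (φ p) :=
    fun p hp => (main1 p.length p le_rfl hp).1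
  have mNE : ∀ p, IsZigzagKnightPath p → φ p ≠ [] :=
    fun p hp => (main1 p.length p le_rfl hp).2
  refine ⟨mD, ?_⟩
  have main2 : ∀ n (p : List (ℤ × ℤ)), p.length ≤ n → IsZigzagKnightPath p →
      ∀ q, IsZigzagKnightPath q → φ p = φ q → p = q := by
    intro n
    induction n with
    | zero =>
      intro p hl hp q hq heq
      have hp0 : p = [] := by
        cases p with
        | nil => rfl
        | cons a t => simp at hl
      subst hp0
      rcases zk_decomp q hq with rfl | ⟨β, hβ, rfl⟩ | ⟨β, hβ, rfl⟩ | ⟨β, γ, hβ, hγ, rfl⟩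
      · rfl
      · exfalso
        rw [h0, h1 β hβ] at heq
        injection heq with _ t
        obtain ⟨hD, hE⟩ := dyck_key (d := []) (e := []) (d' := φ β) (e' := [])
          dyck_nil (mD β hβ) (by exact t)
        exact mNE β hβ hD.symm
      · exfalso
        rw [h0, h2 β hβ] at heq
        injection heq with _ t
        obtain ⟨hD, hE⟩ := dyck_key (d := []) (e := []) (d' := []) (e' := φ β)
          dyck_nil dyck_nil (by exact t)
        exact mNE β hβ hE.symm
      · exfalso
        rw [h0, h3 β γ hβ hγ] at heq
        injection heq with _ t
        obtain ⟨hD, hE⟩ := dyck_key (d := []) (e := []) (d' := φ β) (e' := φ γ)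
          dyck_nil (mD β hβ) (by exact t)
        exact mNE β hβ hD.symm
    | succ n ih =>
      intro p hl hp q hq heq
      rcases zk_decomp p hp with rfl | ⟨α, hα, rfl⟩ | ⟨α, hα, rfl⟩ | ⟨α, δ, hα, hδ, rfl⟩
      · -- p = []
        rcases zk_decomp q hq with rfl | ⟨β, hβ, rfl⟩ | ⟨β, hβ, rfl⟩ | ⟨β, γ, hβ, hγ, rfl⟩
        · rfl
        · exfalso
          rw [h0, h1 β hβ] at heq
          injection heq with _ t
          obtain ⟨hD, hE⟩ := dyck_key (d := []) (e := []) (d' := φ β) (e' := [])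
            dyck_nil (mD β hβ) (by exact t)
          exact mNE β hβ hD.symm
        · exfalso
          rw [h0, h2 β hβ] at heq
          injection heq with _ t
          obtain ⟨hD, hE⟩ := dyck_key (d := []) (e := []) (d' := []) (e' := φ β)
            dyck_nil dyck_nil (by exact t)
          exact mNE β hβ hE.symm
        · exfalso
          rw [h0, h3 β γ hβ hγ] at heq
          injection heq with _ t
          obtain ⟨hD, hE⟩ := dyck_key (d := []) (e := []) (d' := φ β) (e' := φ γ)
            dyck_nil (mD β hβ) (by exact t)
          exact mNE β hβ hD.symm
      · -- p = E Ē α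
        have hlα : α.length ≤ n := by simp at hl; omega
        rcases zk_decomp q hq with rfl | ⟨β, hβ, rfl⟩ | ⟨β, hβ, rfl⟩ | ⟨β, γ, hβ, hγ, rfl⟩
        · exfalso
          rw [h1 α hα, h0] at heq
          injection heq with _ t
          obtain ⟨hD, hE⟩ := dyck_key (d := φ α) (e := []) (d' := []) (e' := [])
            (mD α hα) dyck_nil (by exact t)
          exact mNE α hα hD
        · rw [h1 α hα, h1 β hβ] at heq
          injection heq with _ t
          obtain ⟨hD, hE⟩ := dyck_key (d := φ α) (e := []) (d' := φ β) (e' := [])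
            (mD α hα) (mD β hβ) (by exact t)
          rw [ih α hlα hα β hβ hD]
        · exfalso
          rw [h1 α hα, h2 β hβ] at heq
          injection heq with _ t
          obtain ⟨hD, hE⟩ := dyck_key (d := φ α) (e := []) (d' := []) (e' := φ β)
            (mD α hα) dyck_nil (by exact t)
          exact mNE α hα hD
        · exfalso
          rw [h1 α hα, h3 β γ hβ hγ] at heq
          injection heq with _ t
          obtain ⟨hD, hE⟩ := dyck_key (d := φ α) (e := []) (d' := φ β) (e' := φ γ)
            (mD α hα) (mD β hβ) (by exact t)
          exact mNE γ hγ hE.symm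
      · -- p = N N̄ α
        have hlα : α.length ≤ n := by simp at hl; omega
        rcases zk_decomp q hq with rfl | ⟨β, hβ, rfl⟩ | ⟨β, hβ, rfl⟩ | ⟨β, γ, hβ, hγ, rfl⟩
        · exfalso
          rw [h2 α hα, h0] at heq
          injection heq with _ t
          obtain ⟨hD, hE⟩ := dyck_key (d := []) (e := φ α) (d' := []) (e' := [])
            dyck_nil dyck_nil (by exact t)
          exact mNE α hα hE
        · exfalso
          rw [h2 α hα, h1 β hβ] at heq
          injection heq with _ t
          obtain ⟨hD, hE⟩ := dyck_key (d := []) (e := φ α) (d' := φ β) (e' := [])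
            dyck_nil (mD β hβ) (by exact t)
          exact mNE β hβ hD.symm
        · rw [h2 α hα, h2 β hβ] at heq
          injection heq with _ t
          injection t with _ t2
          rw [ih α hlα hα β hβ t2]
        · exfalso
          rw [h2 α hα, h3 β γ hβ hγ] at heq
          injection heq with _ t
          obtain ⟨hD, hE⟩ := dyck_key (d := []) (e := φ α) (d' := φ β) (e' := φ γ)
            dyck_nil (mD β hβ) (by exact t)
          exact mNE β hβ hD.symm
      · -- p = N Ē (α ++ E N̄ δ)
        have hlα : α.length ≤ n ∧ δ.length ≤ n := by
          simp [List.length_append] at hl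
          omega
        rcases zk_decomp q hq with rfl | ⟨β, hβ, rfl⟩ | ⟨β, hβ, rfl⟩ | ⟨β, γ, hβ, hγ, rfl⟩
        · exfalso
          rw [h3 α δ hα hδ, h0] at heq
          injection heq with _ t
          obtain ⟨hD, hE⟩ := dyck_key (d := φ α) (e := φ δ) (d' := []) (e' := [])
            (mD α hα) dyck_nil (by exact t)
          exact mNE α hα hD
        · exfalso
          rw [h3 α δ hα hδ, h1 β hβ] at heq
          injection heq with _ t
          obtain ⟨hD, hE⟩ := dyck_key (d := φ α) (e := φ δ) (d' := φ β) (e' := [])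
            (mD α hα) (mD β hβ) (by exact t)
          exact mNE δ hδ hE
        · exfalso
          rw [h3 α δ hα hδ, h2 β hβ] at heq
          injection heq with _ t
          obtain ⟨hD, hE⟩ := dyck_key (d := φ α) (e := φ δ) (d' := []) (e' := φ β)
            (mD α hα) dyck_nil (by exact t)
          exact mNE α hα hD
        · rw [h3 α δ hα hδ, h3 β γ hβ hγ] at heq
          injection heq with _ t
          obtain ⟨hD, hE⟩ := dyck_key (d := φ α) (e := φ δ) (d' := φ β) (e' := φ γ)
            (mD α hα) (mD β hβ) (by exact t)
          rw [ih α hlα.1 hα β hβ hD, ih δ hlα.2 hδ γ hγ hE]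
  intro p hp q hq heq
  exact main2 p.length p le_rfl hp q hq heq
end
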